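/- For l = 2 the limit character is given by the bosonic formula χ^{(∞)}_{k,2;b_0}(q,z) = Σ_{n≥0} (−1)^{n+1} q^{n²k + n b_0 + 3n(n+1)/2} z^{nk + b_0 + n + 1} / ( (q)_n (q^n z)_∞ ) + Σ_{n≥0} (−1)^n q^{n²k − n b_0 + n(3n−1)/2} z^{nk + n} / ( (q)_n (q^n z)_∞ ), as an identity of formal power series in q and z. -/

import Mathlib

open Finset Filter MvPowerSeries

noncomputable section

/-- Formal power series in two variables `q` (index 0) and `z` (index 1). -/
abbrev PS : Type := MvPowerSeries (Fin 2) ℂ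

/-- The variable `q`. -/
def Qv : PS := MvPowerSeries.X 0
/-- The variable `z`. -/
def Zv : PS := MvPowerSeries.X 1

/-- Build a power series from its coefficient function. -/
def ofCoeff (c : (Fin 2 →₀ ℕ) → ℂ) : PS := c

/-- The exponent `q^a z^c`. -/
def idx2 (a c : ℕ) : Fin 2 →₀ ℕ := Finsupp.single 0 a + Finsupp.single 1 c

/-- The q-shift operator `(S g)(q,z) = g(q,qz)`. -/
def Sop (f : PS) : PS :=
  ofCoeff fun e => if e 1 ≤ e 0 then MvPowerSeries.coeff (idx2 (e 0 - e 1) (e 1)) f else 0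

/-- The window condition for `(k,l)`-configurations: `x_j + ... + x_{j+l-1} ≤ k`. -/
def windowOK (k l : ℕ) (x : ℕ → ℕ) : Prop := ∀ j, ∑ t ∈ Finset.range l, x (j + t) ≤ k

/-- The boundary condition: `x_0 + ... + x_i ≤ b_i` for `0 ≤ i ≤ l-2`. -/
def boundOK (l : ℕ) (b : ℕ → ℕ) (x : ℕ → ℕ) : Prop :=
  ∀ i, i < l - 1 → ∑ t ∈ Finset.range (i + 1), x t ≤ b i

/-- Admissible boundary vectors: `b_0 ≤ b_1 ≤ ... ≤ b_{l-2} ≤ k`. -/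
def AdmB (k l : ℕ) (b : ℕ → ℕ) : Prop :=
  (∀ i j, i ≤ j → j < l - 1 → b i ≤ b j) ∧ ∀ i, i < l - 1 → b i ≤ k

/-- The character `χ^{(N)}_{k,l;b}(q,z)`: the coefficient of `q^a z^m` counts
`(k,l)`-configurations of length at most `N` obeying the boundary conditions,
with `Σ j·x_j = a` and `Σ x_j = m`. -/
def chiN (k l N : ℕ) (b : ℕ → ℕ) : PS :=
  ofCoeff fun e => (Nat.card {x : ℕ → ℕ //
    windowOK k l x ∧ boundOK l b x ∧ (∀ i, N ≤ i → x i = 0) ∧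
    ∑ j ∈ Finset.range N, j * x j = e 0 ∧ ∑ j ∈ Finset.range N, x j = e 1} : ℂ)

/-- The limit character `χ^{(∞)}_{k,l;b}(q,z)`. -/
def chiInf (k l : ℕ) (b : ℕ → ℕ) : PS :=
  ofCoeff fun e => (Nat.card {x : ℕ → ℕ //
    windowOK k l x ∧ boundOK l b x ∧ (∀ i, e 0 + 1 ≤ i → x i = 0) ∧
    ∑ j ∈ Finset.range (e 0 + 1), j * x j = e 0 ∧
    ∑ j ∈ Finset.range (e 0 + 1), x j = e 1} : ℂ)

/-- The shifted boundary vector `(b_1 - i, ..., b_{l-2} - i, k - i)`. -/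
def shiftB (k l : ℕ) (b : ℕ → ℕ) (i : ℕ) : ℕ → ℕ :=
  fun j => if j + 1 ≤ l - 2 then b (j + 1) - i else k - i

/-- The monomial `q^{p.1} z^{p.2}`. -/
def monoPS (p : ℕ × ℕ) : PS := Qv ^ p.1 * Zv ^ p.2

/-- Exponents in the bracket `[P_1,...,P_l] = P_1^{b_0} P_2^{b_1-b_0} ⋯ P_l^{k-b_{l-2}}`. -/
def bexp (l k : ℕ) (b : ℕ → ℕ) (i : ℕ) : ℕ :=
  if i = 0 then b 0 else if i = l - 1 then k - b (l - 2) else b i - b (i - 1)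

/-- The bracket `[P_1,...,P_l]` as a function of the boundary vector `b`. -/
def bracket (l k : ℕ) (P : ℕ → ℕ × ℕ) (b : ℕ → ℕ) : PS :=
  ∏ i ∈ Finset.range l, monoPS (P i) ^ bexp l k b i

/-- q-exponent pattern of the tuples in the list defining `V_l`
(`r` of the entries carry a factor `z`; `c 0 = 0`). -/
def patQ (l r : ℕ) (c : ℕ → ℕ) (j : ℕ) : ℕ := if j < r then c (l - r + j) else c (j - r)

/-- z-exponent pattern of the tuples in the list defining `V_l`. -/
def patZ (r j : ℕ) : ℕ := if j < r then 1 else 0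

/-- The tuples `(P_1,...,P_l)` appearing in the definition of `V_l`, namely
`q^{mk} z^{nk}[q^{c_{l-r}}z, …, q^{c_{l-1}}z, 1, q^{c_1}, …, q^{c_{l-1-r}}]`
with the common factor `q^m z^n` distributed over the entries. -/
def SimpleTuple (l : ℕ) (P : ℕ → ℕ × ℕ) : Prop :=
  ∃ m n r : ℕ, r < l ∧ ∃ c : ℕ → ℕ, c 0 = 0 ∧ Monotone c ∧
    ∀ j, j < l → P j = (m + patQ l r c j, n + patZ r j)

/-- Admissible boundary data. -/
def Adm (k l : ℕ) : Type := {b : ℕ → ℕ // AdmB k l b}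

/-- The ambient space of functions of `b` with values in power series; `V_l` is a
subspace of it. -/
abbrev VV (k l : ℕ) : Type := Adm k l → PS

/-- The simple vector `f(q,z)·[P_1,...,P_l]`. -/
def simpleVal (k l : ℕ) (f : PS) (P : ℕ → ℕ × ℕ) : VV k l := fun b => f * bracket l k P b.val

/-- The space `V_l`, spanned by simple vectors. -/
def Vspan (k l : ℕ) : Submodule ℂ (VV k l) :=
  Submodule.span ℂ {v | ∃ f P, SimpleTuple l P ∧ v = simpleVal k l f P}

/-- Power series expansion of `1/(1 - q^{w.1} z^{w.2})` where `w` may have negative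
exponents, in which case `1/(1-u) = -Σ_{n≥1} u^{-n}` is used. -/
def geomPS : ℤ × ℤ → PS := fun w =>
  if 0 ≤ w.1 ∧ 0 ≤ w.2 then
    ofCoeff fun e => ({n : ℕ | (n : ℤ) * w.1 = (e 0 : ℤ) ∧ (n : ℤ) * w.2 = (e 1 : ℤ)}.ncard : ℂ)
  else
    ofCoeff fun e =>
      -({n : ℕ | 0 < n ∧ (n : ℤ) * w.1 = -(e 0 : ℤ) ∧ (n : ℤ) * w.2 = -(e 1 : ℤ)}.ncard : ℂ)

/-- Exponents of `S(q^{-1} z P_l / P_1)`. -/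
def wExpA (l : ℕ) (P : ℕ → ℕ × ℕ) : ℤ × ℤ :=
  (((P (l-1)).1 : ℤ) + ((P (l-1)).2 : ℤ) - ((P 0).1 : ℤ) - ((P 0).2 : ℤ),
   ((P (l-1)).2 : ℤ) + 1 - ((P 0).2 : ℤ))

/-- The q-shift of a monomial: `S(q^e z^d) = q^{e+d} z^d`. -/
def Smono (p : ℕ × ℕ) : ℕ × ℕ := (p.1 + p.2, p.2)

/-- The tuple `(S P_1, S P_1, S P_2, ..., S P_{l-1})` produced by the operator `A`. -/
def tupA (P : ℕ → ℕ × ℕ) : ℕ → ℕ × ℕ := fun j => if j = 0 then Smono (P 0) else Smono (P (j - 1))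

/-- The tuple `(S(q^{-1} z P_l), S P_1, ..., S P_{l-1})` produced by the operator `B`. -/
def tupB (l : ℕ) (P : ℕ → ℕ × ℕ) : ℕ → ℕ × ℕ :=
  fun j => if j = 0 then ((P (l-1)).1 + (P (l-1)).2, (P (l-1)).2 + 1) else Smono (P (j - 1))

/-- Defining property of the operator `A`:
`A(f[P_1,…,P_l]) = S(f/(1 - q^{-1}zP_l/P_1)·[P_1,P_1,P_2,…,P_{l-1}])`. -/
def HypA (k l : ℕ) (A : Module.End ℂ (VV k l)) : Prop :=
  ∀ f P, SimpleTuple l P →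
    A (simpleVal k l f P) = simpleVal k l (Sop f * geomPS (wExpA l P)) (tupA P)

/-- Defining property of the operator `B`:
`B(f[P_1,…,P_l]) = S(f/(1 - q z^{-1}P_1/P_l)·[q^{-1}zP_l,P_1,…,P_{l-1}])`. -/
def HypB (k l : ℕ) (B : Module.End ℂ (VV k l)) : Prop :=
  ∀ f P, SimpleTuple l P →
    B (simpleVal k l f P) =
      simpleVal k l (Sop f * geomPS (-(wExpA l P).1, -(wExpA l P).2)) (tupB l P)

/-- The vector `v_ini = [1,...,1]`. -/
def vini (k l : ℕ) : VV k l := simpleVal k l 1 (fun _ => (0, 0))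

/-- `(z)_n = Π_{i=0}^{n-1} (1 - q^i z)`. -/
def pochZ (n : ℕ) : PS := ∏ i ∈ Finset.range n, (1 - Qv ^ i * Zv)
/-- `(q)_t = Π_{i=1}^{t} (1 - q^i)`. -/
def pochQ (t : ℕ) : PS := ∏ i ∈ Finset.range t, (1 - Qv ^ (i + 1))
/-- `(q^t z)_∞ = Π_{i≥0} (1 - q^{t+i} z)`, defined coefficientwise. -/
def pochInfQZ (t : ℕ) : PS :=
  ofCoeff fun e =>
    MvPowerSeries.coeff e (∏ i ∈ Finset.range (e 0 + 1), (1 - Qv ^ (t + i) * Zv))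
/-- `(z)_∞ = Π_{i≥0} (1 - q^i z)`. -/
def pochInfZ : PS := pochInfQZ 0

/-- The vector `v_∞ = [1,...,1]/(z)_∞`. -/
def vinf (k l : ℕ) : VV k l := simpleVal k l pochInfZ⁻¹ (fun _ => (0, 0))

/-- Application of a monomial (word) in the operators `A` (letter `true`) and
`B` (letter `false`) to a vector; the leftmost letter acts last read, i.e.
`C_1 C_2 ⋯ C_m v = C_1 (C_2 (⋯ (C_m v)))`. -/
def wact (k l : ℕ) (A B : Module.End ℂ (VV k l)) (w : List Bool) (v : VV k l) : VV k l :=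
  w.foldr (fun c u => if c then A u else B u) v

/-- A good monomial: `C_i = A` implies `C_{i+l-1} = A` (letters 0-indexed, `true = A`). -/
def GoodWord (l : ℕ) (w : List Bool) : Prop :=
  ∀ i, i + (l - 1) < w.length → w.getD i true = true → w.getD (i + (l - 1)) true = true

/-- Canonical representative of an equivalence class of monomials: no trailing `A`s. -/
def Reduced (w : List Bool) : Prop := w = [] ∨ w.getLast? = some false

/-- Symbols for marked vertices: `•`, `∘`, `×`. -/
inductive MSym : Type
  | dot | circ | mark
  deriving DecidableEq

/-- The `A`-arrow on (possibly marked) vertices. -/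
def stepA : List MSym → List MSym
  | MSym.circ :: J => J ++ [MSym.circ]
  | MSym.dot :: _ :: J => MSym.dot :: (J ++ [MSym.circ])
  | MSym.mark :: MSym.dot :: J => MSym.dot :: (J ++ [MSym.circ])
  | MSym.mark :: MSym.circ :: J => MSym.mark :: (J ++ [MSym.circ])
  | MSym.mark :: MSym.mark :: J => MSym.dot :: (J ++ [MSym.circ])
  | v => v

/-- The `B`-arrow on (possibly marked) vertices: rotation. -/
def stepB : List MSym → List MSym
  | [] => []
  | x :: J => J ++ [x]

/-- The marked path of the monomial `w` (extended by `A`s at positions beyond its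
length), starting from `[•,…,•,×]`; `mstate l w t` is the vertex after `t` arrows. -/
def mstate (l : ℕ) (w : List Bool) : ℕ → List MSym
  | 0 => List.replicate (l - 1) MSym.dot ++ [MSym.mark]
  | t + 1 => (if w.getD t true then stepA else stepB) (mstate l w t)

/-- The `t`-th vertex of the marked path has the form `[× • J]`, i.e. the `t`-th
arrow is of type (i) or (ii). -/
def CSrc (l : ℕ) (w : List Bool) (t : ℕ) : Prop :=
  (mstate l w t).getD 0 MSym.circ = MSym.mark ∧ (mstate l w t).getD 1 MSym.circ = MSym.dot

/-- `(N A K, N B K)` is a cancellation pair: `N A K` is good and the displayed `A`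
is its cancellation `A`-arrow (the last arrow of type (i) or (ii)). -/
def CancelPair (l : ℕ) (N K : List Bool) : Prop :=
  GoodWord l (N ++ true :: K) ∧ CSrc l (N ++ true :: K) N.length ∧
    ∀ t, N.length < t → ¬ CSrc l (N ++ true :: K) t

/-- `w` is good and has a cancellation `A`-arrow. -/
def HasCA (l : ℕ) (w : List Bool) : Prop :=
  GoodWord l w ∧ ∃ t, w.getD t true = true ∧ CSrc l w t ∧ ∀ t', t < t' → ¬ CSrc l w t'

/-- `w` is good and has a cancellation `B`-arrow. -/
def HasCB (l : ℕ) (w : List Bool) : Prop :=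
  GoodWord l w ∧ ∃ t, w.getD t true = false ∧ CSrc l w t ∧ ∀ t', t < t' → ¬ CSrc l w t'

/-- The index of the cancellation arrow. -/
def cancelIdx (l : ℕ) (w : List Bool) : ℕ :=
  sInf {t | CSrc l w t ∧ ∀ t', t < t' → ¬ CSrc l w t'}

/-- Flip the letter at the cancellation arrow. -/
def flipCancel (l : ℕ) (w : List Bool) : List Bool :=
  (w ++ List.replicate (cancelIdx l w + 1 - w.length) true).set (cancelIdx l w) false

/-- The lattice `Λ` is `ℕ → ℤ` supported on `{0,…,l-1}`; coordinates `0,…,l-2`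
are the generators `b_0,…,b_{l-2}` and coordinate `l-1` is the generator `k`.
`Ma` is the map `M_a`: `b_i ↦ b_{i+1}` (`i ≤ l-3`), `b_{l-2} ↦ k`, `k ↦ k`. -/
def Ma (l : ℕ) (v : ℕ → ℤ) : ℕ → ℤ := fun j =>
  if j = 0 then 0
  else if j = l - 1 then v (l - 2) + v (l - 1)
  else if j < l - 1 then v (j - 1)
  else 0

/-- The map `M_b`: `b_i ↦ b_{i+1} - b_0` (`i ≤ l-3`), `b_{l-2} ↦ k - b_0`, `k ↦ k`. -/
def Mb (l : ℕ) (v : ℕ → ℤ) : ℕ → ℤ := fun j =>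
  if j = 0 then -(∑ i ∈ Finset.range (l - 1), v i)
  else if j = l - 1 then v (l - 2) + v (l - 1)
  else if j < l - 1 then v (j - 1)
  else 0

/-- The representative `ī ∈ {1,…,l}` of `i` modulo `l`. -/
def ibar (l : ℕ) (i : ℤ) : ℕ := ((i - 1) % (l : ℤ)).toNat + 1

/-- `ι_{i,j} = b_{ī-2} - b_{j̄-2} + k·δ(ī ≤ j̄)` (with `b_{-1} = 0`). -/
def iotaL (l : ℕ) (i j : ℤ) : ℕ → ℤ := fun t =>
  (if 2 ≤ ibar l i ∧ t = ibar l i - 2 then 1 else 0)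
  - (if 2 ≤ ibar l j ∧ t = ibar l j - 2 then 1 else 0)
  + (if ibar l i ≤ ibar l j ∧ t = l - 1 then 1 else 0)

/-- `M_{c_1} ∘ ⋯ ∘ M_{c_m}` applied to `v`, where `c_i = a` if the `i`-th letter is
`A` (`true`) and `c_i = b` otherwise. -/
def applyWord (l : ℕ) (w : List Bool) (v : ℕ → ℤ) : ℕ → ℤ :=
  w.foldr (fun c u => if c then Ma l u else Mb l u) v

/-- The extremal configuration of the monomial `w`:
`x_i = 0` if `C_{i+1} = A` and `x_i = M_{c_1} ∘ ⋯ ∘ M_{c_i}(b_0)` if `C_{i+1} = B`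
(entries beyond the length of `w` are `0`, matching equivalence of configurations). -/
def xconf (l : ℕ) (w : List Bool) (i : ℕ) : ℕ → ℤ :=
  if w.getD i true = true then 0 else applyWord l (w.take i) (iotaL l 2 1)

/-- The `A`-arrow of the summation graph (vertices as arrays of `•` = `true`,
`∘` = `false`). -/
def vstepA : List Bool → List Bool
  | false :: J => J ++ [false]
  | true :: _ :: J => true :: (J ++ [false])
  | v => v

/-- The `B`-arrow of the summation graph: rotation. -/
def vstepB : List Bool → List Bool
  | [] => []
  | x :: J => J ++ [x]

/-- The path associated with `w` in the summation graph, starting from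
`I_top = [•,…,•]`; `vstate l w t` is the vertex `I^{(t)}`. -/
def vstate (l : ℕ) (w : List Bool) (t : ℕ) : List Bool :=
  (w.take t).foldl (fun v c => if c then vstepA v else vstepB v) (List.replicate l true)

/-- The evolution of the vector part of a simple vector under one operator. -/
def tupStep (l : ℕ) (c : Bool) (P : ℕ → ℕ × ℕ) : ℕ → ℕ × ℕ :=
  if c then tupA P else tupB l P

/-- The vector part of `M v_∞` for a word `M`. -/
def wordTuple (l : ℕ) : List Bool → ℕ → ℕ × ℕ
  | [] => fun _ => (0, 0)
  | c :: w => tupStep l c (wordTuple l w)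

/-- The scalar part of `M v_∞` for a word `M`. -/
def wordScalar (l : ℕ) : List Bool → PS
  | [] => pochInfZ⁻¹
  | c :: w =>
      Sop (wordScalar l w) *
        (if c then geomPS (wExpA l (wordTuple l w))
         else geomPS (-(wExpA l (wordTuple l w)).1, -(wExpA l (wordTuple l w)).2))

/-- A cancellation block `𝔹_s = C_1 ⋯ C_{l+s}` with `C_1 = C_{s+2} = C_l = B`,
`C_2 = ⋯ = C_{s+1} = A`, `C_{l+1} = ⋯ = C_{l+s} = A` (0-indexed positions). -/
def IsBlock (l s : ℕ) (w : List Bool) : Prop :=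
  s ≤ l - 2 ∧ w.length = l + s ∧
  w.getD 0 true = false ∧ w.getD (s + 1) true = false ∧ w.getD (l - 1) true = false ∧
  (∀ i, 1 ≤ i → i ≤ s → w.getD i true = true) ∧
  (∀ i, l ≤ i → i < l + s → w.getD i true = true)

/-- The block `𝔼_i = C_2 ⋯ C_l` where `C_j = B` iff `j ∈ {σ(1),…,σ(i)}`
(1-based values of the permutation; `true = A`, `false = B`). -/
def Eblock (l : ℕ) (σ : Equiv.Perm (Fin l)) (i : ℕ) : List Bool :=
  (List.range (l - 1)).map fun t => decide (∀ a : Fin l, (a : ℕ) < i → (σ a : ℕ) ≠ t + 1)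

/-- The word `𝔼_{l-2}^{n_{l-2}} ⋯ 𝔼_1^{n_1}`. -/
def coreWord (l : ℕ) (σ : Equiv.Perm (Fin l)) (n : ℕ → ℤ) : List Bool :=
  (((List.range (l - 2)).reverse.map fun i' =>
    (List.replicate (n (i' + 1)).toNat (Eblock l σ (i' + 1))).flatten)).flatten

/-- The word `B^{n_{l-1}} 𝔼_{l-2}^{n_{l-2}} ⋯ 𝔼_1^{n_1}`; for `n_{l-1} < 0` the
first `-n_{l-1}` letters (which are `B`s) are removed instead. -/
def theWord (l : ℕ) (σ : Equiv.Perm (Fin l)) (n : ℕ → ℤ) : List Bool :=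
  if 0 ≤ n (l - 1) then List.replicate (n (l - 1)).toNat false ++ coreWord l σ n
  else (coreWord l σ n).drop (-(n (l - 1))).toNat

/-- `σ(1) = l` and `σ(l) = 1` (in 1-based notation). -/
def SigmaCond (l : ℕ) (σ : Equiv.Perm (Fin l)) : Prop :=
  (∀ a : Fin l, (a : ℕ) = 0 → (σ a : ℕ) = l - 1) ∧
  (∀ a : Fin l, (a : ℕ) = l - 1 → (σ a : ℕ) = 0)

/-- The conditions on `n = (n_1,…,n_{l-1})`: `n_i ≥ 0` for `i ≤ l-2`,
`n_{l-1} ≥ 2 - σ(l-1)`, `n_i > 0` whenever `σ(i) < σ(i+1)`; the unused entries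
are normalized to `0`. -/
def NCond (l : ℕ) (σ : Equiv.Perm (Fin l)) (n : ℕ → ℤ) : Prop :=
  (∀ i, 1 ≤ i → i ≤ l - 2 → 0 ≤ n i) ∧
  (∀ a : Fin l, (a : ℕ) = l - 2 → (2 : ℤ) - (((σ a : ℕ) : ℤ) + 1) ≤ n (l - 1)) ∧
  (∀ i, 1 ≤ i → i ≤ l - 1 → ∀ a b : Fin l, (a : ℕ) = i - 1 → (b : ℕ) = i →
      (σ a : ℕ) < (σ b : ℕ) → 0 < n i) ∧
  (∀ i, i = 0 ∨ l - 1 < i → n i = 0)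

end

noncomputable section Aux

open MvPowerSeries

lemma coeff_ofCoeff (c : (Fin 2 →₀ ℕ) → ℂ) (e : Fin 2 →₀ ℕ) :
    MvPowerSeries.coeff e (ofCoeff c) = c e := rfl

@[simp] lemma idx2_apply0 (a c : ℕ) : idx2 a c 0 = a := by
  simp [idx2, Finsupp.single_apply]

@[simp] lemma idx2_apply1 (a c : ℕ) : idx2 a c 1 = c := by
  simp [idx2, Finsupp.single_apply]

lemma fin2_ext {e f : Fin 2 →₀ ℕ} (h0 : e 0 = f 0) (h1 : e 1 = f 1) : e = f := by
  ext i
  match i with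
  | ⟨0, _⟩ => exact h0
  | ⟨1, _⟩ => exact h1

lemma eq_idx2 (e : Fin 2 →₀ ℕ) : e = idx2 (e 0) (e 1) := by
  apply fin2_ext <;> simp

lemma idx2_le_iff {a c : ℕ} {e : Fin 2 →₀ ℕ} : idx2 a c ≤ e ↔ a ≤ e 0 ∧ c ≤ e 1 := by
  rw [Finsupp.le_def]
  constructor
  · intro h
    constructor
    · simpa using h 0
    · simpa using h 1
  · intro ⟨h0, h1⟩ i
    match i with
    | ⟨0, _⟩ => simpa using h0
    | ⟨1, _⟩ => simpa using h1

lemma sub_idx2 (e : Fin 2 →₀ ℕ) (a c : ℕ) : e - idx2 a c = idx2 (e 0 - a) (e 1 - c) := by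
  apply fin2_ext <;> simp [Finsupp.tsub_apply]

/-- Key monomial-coefficient lemma. -/
lemma coeffQZ (a c : ℕ) (f : PS) (e : Fin 2 →₀ ℕ) :
    MvPowerSeries.coeff e (Qv ^ a * Zv ^ c * f) =
      if a ≤ e 0 ∧ c ≤ e 1 then MvPowerSeries.coeff (idx2 (e 0 - a) (e 1 - c)) f else 0 := by
  have h : Qv ^ a * Zv ^ c = MvPowerSeries.monomial (idx2 a c) 1 := by
    rw [Qv, Zv, X_pow_eq, X_pow_eq, monomial_mul_monomial, one_mul]
    rfl
  rw [h, coeff_monomial_mul, sub_idx2]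
  by_cases hc : a ≤ e 0 ∧ c ≤ e 1
  · rw [if_pos (idx2_le_iff.mpr hc), if_pos hc, one_mul]
  · rw [if_neg (fun hh => hc (idx2_le_iff.mp hh)), if_neg hc]

end Aux
noncomputable section Aux2
open MvPowerSeries

/-- truncated product -/
def PQZ (m M : ℕ) : PS := ∏ i ∈ Finset.range M, (1 - Qv ^ (m + i) * Zv)

lemma coeff_pochInfQZ (m : ℕ) (e : Fin 2 →₀ ℕ) :
    MvPowerSeries.coeff e (pochInfQZ m) = MvPowerSeries.coeff e (PQZ m (e 0 + 1)) := rfl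

lemma coeffQZ1 (a : ℕ) (f : PS) (e : Fin 2 →₀ ℕ) :
    MvPowerSeries.coeff e (Qv ^ a * Zv * f) =
      if a ≤ e 0 ∧ 1 ≤ e 1 then MvPowerSeries.coeff (idx2 (e 0 - a) (e 1 - 1)) f else 0 := by
  rw [show (Qv ^ a * Zv * f : PS) = Qv ^ a * Zv ^ 1 * f by rw [pow_one], coeffQZ]

lemma coeff_mul_QZ (f : PS) (a : ℕ) (e : Fin 2 →₀ ℕ) :
    MvPowerSeries.coeff e (f * (Qv ^ a * Zv)) =
      if a ≤ e 0 ∧ 1 ≤ e 1 then MvPowerSeries.coeff (idx2 (e 0 - a) (e 1 - 1)) f else 0 := by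
  rw [mul_comm, coeffQZ1]

lemma PQZ_shift (m M : ℕ) : PQZ m (M + 1) = (1 - Qv ^ m * Zv) * PQZ (m + 1) M := by
  have hc : ∏ i ∈ Finset.range M, (1 - Qv ^ (m + (i + 1)) * Zv)
      = ∏ i ∈ Finset.range M, (1 - Qv ^ (m + 1 + i) * Zv) :=
    Finset.prod_congr rfl (fun i _ => by rw [show m + (i + 1) = m + 1 + i by omega])
  rw [PQZ, Finset.prod_range_succ', hc, mul_comm]
  rfl

lemma coeff_PQZ_stab (m : ℕ) (e : Fin 2 →₀ ℕ) {M M' : ℕ} (h : e 0 + 1 ≤ M) (h2 : M ≤ M') :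
    MvPowerSeries.coeff e (PQZ m M) = MvPowerSeries.coeff e (PQZ m M') := by
  induction M' with
  | zero => exact absurd h2 (by omega)
  | succ M' ih =>
    rcases Nat.lt_or_ge M (M' + 1) with hlt | hge
    · have hM : M ≤ M' := by omega
      rw [ih hM]
      have hstep : PQZ m (M' + 1) = PQZ m M' * (1 - Qv ^ (m + M') * Zv) :=
        Finset.prod_range_succ _ _
      rw [hstep, mul_one_sub, map_sub, coeff_mul_QZ, if_neg (by omega), sub_zero]
    · have : M = M' + 1 := by omega
      rw [this]

lemma coeff_pochInf_eq (m M : ℕ) (e : Fin 2 →₀ ℕ) (h : e 0 + 1 ≤ M) :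
    MvPowerSeries.coeff e (pochInfQZ m) = MvPowerSeries.coeff e (PQZ m M) := by
  rw [coeff_pochInfQZ]
  exact coeff_PQZ_stab m e (le_refl _) h

lemma pochInf_factor (m : ℕ) : pochInfQZ m = (1 - Qv ^ m * Zv) * pochInfQZ (m + 1) := by
  apply MvPowerSeries.ext
  intro e
  rw [coeff_pochInf_eq m (e 0 + 2) e (by omega), PQZ_shift, one_sub_mul, one_sub_mul,
    map_sub, map_sub, coeffQZ1, coeffQZ1, ← coeff_pochInf_eq (m + 1) (e 0 + 1) e (by omega)]
  congr 1
  split_ifs with hc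
  · rw [← coeff_pochInf_eq (m + 1) (e 0 + 1) _ (by rw [idx2_apply0]; omega)]
  · rfl

/-- series only involving q -/
def QonlyP (f : PS) : Prop := ∀ e : Fin 2 →₀ ℕ, e 1 ≠ 0 → MvPowerSeries.coeff e f = 0

lemma fin2_eq_zero_iff (e : Fin 2 →₀ ℕ) : e = 0 ↔ e 0 = 0 ∧ e 1 = 0 := by
  constructor
  · intro h; rw [h]; simp
  · intro ⟨h0, h1⟩; apply fin2_ext <;> simp [h0, h1]

lemma antidiag_comp {e : Fin 2 →₀ ℕ} {p : (Fin 2 →₀ ℕ) × (Fin 2 →₀ ℕ)}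
    (h : p ∈ Finset.HasAntidiagonal.antidiagonal e) : p.1 0 + p.2 0 = e 0 ∧ p.1 1 + p.2 1 = e 1 := by
  rw [Finset.HasAntidiagonal.mem_antidiagonal] at h
  constructor
  · rw [← h]; simp
  · rw [← h]; simp

lemma QonlyP.mul {f g : PS} (hf : QonlyP f) (hg : QonlyP g) : QonlyP (f * g) := by
  intro e he
  classical
  rw [MvPowerSeries.coeff_mul]
  apply Finset.sum_eq_zero
  intro p hp
  obtain ⟨-, h1⟩ := antidiag_comp hp
  rcases Nat.eq_zero_or_pos (p.1 1) with h | h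
  · rw [hg p.2 (by omega), mul_zero]
  · rw [hf p.1 (by omega), zero_mul]

lemma QonlyP.one : QonlyP 1 := by
  intro e he
  classical
  rw [MvPowerSeries.coeff_one, if_neg]
  intro h
  rw [fin2_eq_zero_iff] at h
  exact he h.2

lemma QonlyP.qpow (a : ℕ) : QonlyP (Qv ^ a) := by
  intro e he
  classical
  rw [Qv, MvPowerSeries.coeff_X_pow, if_neg]
  intro h
  rw [h] at he
  simp [Finsupp.single_apply] at he

lemma QonlyP.sub {f g : PS} (hf : QonlyP f) (hg : QonlyP g) : QonlyP (f - g) := by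
  intro e he
  rw [map_sub, hf e he, hg e he, sub_zero]

lemma Qonly_pochQ (t : ℕ) : QonlyP (pochQ t) := by
  rw [pochQ]
  induction t with
  | zero => simpa using QonlyP.one
  | succ t ih =>
    rw [Finset.prod_range_succ]
    exact ih.mul (QonlyP.one.sub (QonlyP.qpow _))

lemma coeff_PQZ_vanish (m M : ℕ) (e : Fin 2 →₀ ℕ) (h : e 0 < m * e 1) :
    MvPowerSeries.coeff e (PQZ m M) = 0 := by
  induction M generalizing e with
  | zero =>
    rw [PQZ]
    classical
    simp only [Finset.range_zero, Finset.prod_empty]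
    rw [MvPowerSeries.coeff_one, if_neg]
    intro hz
    rw [fin2_eq_zero_iff] at hz
    rw [hz.1, hz.2, Nat.mul_zero] at h
    omega
  | succ M ih =>
    have hstep : PQZ m (M + 1) = PQZ m M * (1 - Qv ^ (m + M) * Zv) :=
      Finset.prod_range_succ _ _
    rw [hstep, mul_one_sub, map_sub, ih e h, coeff_mul_QZ, zero_sub, neg_eq_zero]
    split_ifs with hc
    · apply ih
      simp only [idx2_apply0, idx2_apply1]
      have h1 : m * e 1 = m * (e 1 - 1) + m := by
        have : e 1 = (e 1 - 1) + 1 := by omega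
        rw [this, Nat.mul_add, mul_one]; congr 1 <;> omega
      omega
    · rfl

lemma coeff_pochInf_vanish (m : ℕ) (e : Fin 2 →₀ ℕ) (h : e 0 < m * e 1) :
    MvPowerSeries.coeff e (pochInfQZ m) = 0 := by
  rw [coeff_pochInfQZ]; exact coeff_PQZ_vanish _ _ _ h

lemma coeff_pochProd_vanish (t m : ℕ) (e : Fin 2 →₀ ℕ) (h : e 0 < m * e 1) :
    MvPowerSeries.coeff e (pochQ t * pochInfQZ m) = 0 := by
  classical
  rw [MvPowerSeries.coeff_mul]
  apply Finset.sum_eq_zero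
  intro p hp
  obtain ⟨h0, h1⟩ := antidiag_comp hp
  rcases Nat.eq_zero_or_pos (p.1 1) with hz | hz
  · rw [coeff_pochInf_vanish m p.2 (by
      have h3 : m * e 1 = m * p.1 1 + m * p.2 1 := by rw [← Nat.mul_add, h1]
      have h4 : m * p.1 1 = 0 := by rw [hz, Nat.mul_zero]
      omega), mul_zero]
  · rw [Qonly_pochQ t p.1 (by omega), zero_mul]

lemma constCoeff_pochQ (t : ℕ) : MvPowerSeries.constantCoeff (pochQ t) = 1 := by
  rw [pochQ, map_prod]
  apply Finset.prod_eq_one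
  intro i _
  rw [map_sub, map_one, map_pow, Qv, MvPowerSeries.constantCoeff_X]
  simp

lemma constCoeff_pochInf (m : ℕ) : MvPowerSeries.constantCoeff (pochInfQZ m) = 1 := by
  classical
  rw [← MvPowerSeries.coeff_zero_eq_constantCoeff_apply, coeff_pochInfQZ]
  have h1 : (0 : Fin 2 →₀ ℕ) 0 + 1 = 1 := by simp
  rw [h1, PQZ, Finset.prod_range_one, map_sub, ← mul_one (Qv ^ (m + 0) * Zv), coeffQZ1,
    if_neg (by simp), MvPowerSeries.coeff_one, if_pos rfl, sub_zero]

lemma invPoch_cancel (t m : ℕ) :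
    (pochQ t * pochInfQZ m) * (pochQ t * pochInfQZ m)⁻¹ = 1 := by
  apply MvPowerSeries.mul_inv_cancel
  rw [map_mul, constCoeff_pochQ, constCoeff_pochInf, mul_one]
  exact one_ne_zero

lemma coeff_inv_vanish (t m : ℕ) (e : Fin 2 →₀ ℕ) (h : e 0 < m * e 1) :
    MvPowerSeries.coeff e ((pochQ t * pochInfQZ m)⁻¹) = 0 := by
  classical
  set P := pochQ t * pochInfQZ m with hP
  have key := invPoch_cancel t m
  -- strong induction on e 0 + e 1
  have main : ∀ N : ℕ, ∀ e : Fin 2 →₀ ℕ, e 0 + e 1 ≤ N → e 0 < m * e 1 →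
      MvPowerSeries.coeff e (P⁻¹) = 0 := by
    intro N
    induction N with
    | zero =>
      intro e h1 h2
      exfalso
      have h3 : e 1 = 0 := by omega
      rw [h3, Nat.mul_zero] at h2
      omega
    | succ N ih =>
      intro e h1 h2
      have hone : MvPowerSeries.coeff e (P * P⁻¹) = 0 := by
        rw [key, MvPowerSeries.coeff_one, if_neg]
        intro hz
        rw [fin2_eq_zero_iff] at hz
        rw [hz.1, hz.2, Nat.mul_zero] at h2
        omega
      rw [MvPowerSeries.coeff_mul] at hone
      have hmem : ((0 : Fin 2 →₀ ℕ), e) ∈ Finset.HasAntidiagonal.antidiagonal e := by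
        rw [Finset.HasAntidiagonal.mem_antidiagonal, zero_add]
      rw [← Finset.add_sum_erase _ _ hmem] at hone
      have hrest : ∑ p ∈ (Finset.HasAntidiagonal.antidiagonal e).erase (0, e),
          MvPowerSeries.coeff p.1 P * MvPowerSeries.coeff p.2 (P⁻¹) = 0 := by
        apply Finset.sum_eq_zero
        intro p hp
        have hpmem := Finset.mem_of_mem_erase hp
        have hpne := Finset.ne_of_mem_erase hp
        obtain ⟨h0, h1c⟩ := antidiag_comp hpmem
        have hp1ne : p.1 ≠ 0 := by
          intro hz
          apply hpne
          rw [Finset.HasAntidiagonal.mem_antidiagonal, hz, zero_add] at hpmem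
          rw [Prod.ext_iff]; exact ⟨hz, hpmem⟩
        have hp1pos : 0 < p.1 0 + p.1 1 := by
          rcases Nat.eq_zero_or_pos (p.1 0 + p.1 1) with hz | hp
          · exact absurd (by rw [fin2_eq_zero_iff]; omega) hp1ne
          · exact hp
        rcases Nat.lt_or_ge (p.1 0) (m * p.1 1) with hv | hv
        · rw [coeff_pochProd_vanish t m p.1 hv, zero_mul]
        · rw [ih p.2 (by omega) (by
            have h5 : m * e 1 = m * p.1 1 + m * p.2 1 := by rw [← Nat.mul_add, h1c]
            omega), mul_zero]
      rw [hrest, add_zero, MvPowerSeries.coeff_zero_eq_constantCoeff_apply, hP, map_mul,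
        constCoeff_pochQ, constCoeff_pochInf, mul_one, one_mul] at hone
      exact hone
  exact main (e 0 + e 1) e (le_refl _) h

end Aux2
noncomputable section Aux3
open MvPowerSeries

lemma coeff_Sop (f : PS) (e : Fin 2 →₀ ℕ) :
    MvPowerSeries.coeff e (Sop f) =
      if e 1 ≤ e 0 then MvPowerSeries.coeff (idx2 (e 0 - e 1) (e 1)) f else 0 := rfl

lemma Sop_add (f g : PS) : Sop (f + g) = Sop f + Sop g := by
  apply MvPowerSeries.ext
  intro e
  rw [map_add, coeff_Sop, coeff_Sop, coeff_Sop, map_add]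
  split_ifs <;> simp

lemma Sop_zero : Sop 0 = 0 := by
  apply MvPowerSeries.ext
  intro e
  rw [coeff_Sop]
  split_ifs <;> simp

lemma Sop_one : Sop 1 = 1 := by
  classical
  apply MvPowerSeries.ext
  intro e
  rw [coeff_Sop, MvPowerSeries.coeff_one, MvPowerSeries.coeff_one]
  by_cases h : e 1 ≤ e 0
  · rw [if_pos h]
    by_cases hz : e = 0
    · rw [if_pos (by rw [hz]; apply fin2_ext <;> simp), if_pos hz]
    · rw [if_neg, if_neg hz]
      intro hc
      apply hz
      rw [fin2_eq_zero_iff] at hc ⊢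
      simp only [idx2_apply0, idx2_apply1] at hc
      omega
  · rw [if_neg h, if_neg]
    intro hc
    rw [fin2_eq_zero_iff] at hc
    omega

set_option maxHeartbeats 1000000 in
lemma Sop_mul (f g : PS) : Sop (f * g) = Sop f * Sop g := by
  apply MvPowerSeries.ext
  intro e
  rw [coeff_Sop, MvPowerSeries.coeff_mul]
  by_cases h : e 1 ≤ e 0
  · rw [if_pos h, MvPowerSeries.coeff_mul]
    have hvan : ∀ p ∈ Finset.HasAntidiagonal.antidiagonal e,
        MvPowerSeries.coeff p.1 (Sop f) * MvPowerSeries.coeff p.2 (Sop g) ≠ 0 →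
        p.1 1 ≤ p.1 0 ∧ p.2 1 ≤ p.2 0 := by
      intro p _ hne
      constructor
      · by_contra hcon
        rw [coeff_Sop f p.1, if_neg (by omega)] at hne
        simp at hne
      · by_contra hcon
        rw [coeff_Sop g p.2, if_neg (by omega)] at hne
        simp at hne
    rw [← Finset.sum_filter_of_ne hvan]
    have key : ∀ (F : PS) (u : Fin 2 →₀ ℕ),
        MvPowerSeries.coeff (idx2 (u 0 + u 1) (u 1)) (Sop F) = MvPowerSeries.coeff u F := by
      intro F u
      rw [coeff_Sop, if_pos (by simp)]
      have hu : idx2 (idx2 (u 0 + u 1) (u 1) 0 - idx2 (u 0 + u 1) (u 1) 1)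
          (idx2 (u 0 + u 1) (u 1) 1) = u := by
        apply fin2_ext <;> simp
      rw [hu]
    apply Finset.sum_nbij'
      (i := fun (p : (Fin 2 →₀ ℕ) × (Fin 2 →₀ ℕ)) =>
        (idx2 (p.1 0 + p.1 1) (p.1 1), idx2 (p.2 0 + p.2 1) (p.2 1)))
      (j := fun (r : (Fin 2 →₀ ℕ) × (Fin 2 →₀ ℕ)) =>
        (idx2 (r.1 0 - r.1 1) (r.1 1), idx2 (r.2 0 - r.2 1) (r.2 1)))
    · intro p hp
      obtain ⟨hc0, hc1⟩ := antidiag_comp hp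
      simp only [idx2_apply0, idx2_apply1] at hc0 hc1
      rw [Finset.mem_filter]
      refine ⟨?_, by simp, by simp⟩
      rw [Finset.HasAntidiagonal.mem_antidiagonal]
      apply fin2_ext <;> simp <;> omega
    · intro r hr
      rw [Finset.mem_filter] at hr
      obtain ⟨hr1, hf1, hf2⟩ := hr
      obtain ⟨hc0, hc1⟩ := antidiag_comp hr1
      rw [Finset.HasAntidiagonal.mem_antidiagonal]
      apply fin2_ext <;> simp <;> omega
    · intro p hp
      rw [Prod.ext_iff]
      constructor <;> (apply fin2_ext <;> simp)
    · intro r hr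
      rw [Finset.mem_filter] at hr
      obtain ⟨hr1, hf1, hf2⟩ := hr
      rw [Prod.ext_iff]
      constructor <;>
        · apply fin2_ext <;> simp
          omega
    · intro p hp
      dsimp only
      rw [key f p.1, key g p.2]
  · rw [if_neg h, MvPowerSeries.coeff_mul]
    symm
    apply Finset.sum_eq_zero
    intro p hp
    rw [Finset.HasAntidiagonal.mem_antidiagonal] at hp
    have hc0 : p.1 0 + p.2 0 = e 0 := by rw [← hp]; simp
    have hc1 : p.1 1 + p.2 1 = e 1 := by rw [← hp]; simp
    rcases le_or_gt (p.1 1) (p.1 0) with h1 | h1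
    · rw [coeff_Sop g p.2, if_neg (by omega)]
      simp
    · rw [coeff_Sop f p.1, if_neg (by omega)]
      simp

/-- Sop as a ring homomorphism. -/
def SopHom : PS →+* PS where
  toFun := Sop
  map_one' := Sop_one
  map_mul' := Sop_mul
  map_zero' := Sop_zero
  map_add' := Sop_add

lemma Sop_Qonly {f : PS} (hf : QonlyP f) : Sop f = f := by
  apply MvPowerSeries.ext
  intro e
  rw [coeff_Sop]
  by_cases h : e 1 ≤ e 0
  · rw [if_pos h]
    rcases Nat.eq_zero_or_pos (e 1) with hz | hpos
    · have hh : idx2 (e 0 - e 1) (e 1) = e := by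
        apply fin2_ext <;> simp [hz]
      rw [hh]
    · rw [hf _ (by simp; omega), hf _ (by omega)]
  · rw [if_neg h, hf _ (by omega)]

lemma Sop_QZ (a c : ℕ) (f : PS) : Sop (Qv ^ a * Zv ^ c * f) = Qv ^ (a + c) * Zv ^ c * Sop f := by
  apply MvPowerSeries.ext
  intro e
  rw [coeff_Sop, coeffQZ]
  by_cases h : e 1 ≤ e 0
  · rw [if_pos h, coeffQZ]
    simp only [idx2_apply0, idx2_apply1]
    by_cases h2 : a ≤ e 0 - e 1 ∧ c ≤ e 1
    · rw [if_pos h2, if_pos (by omega), coeff_Sop]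
      simp only [idx2_apply0, idx2_apply1]
      rw [if_pos (by omega), show e 0 - e 1 - a = e 0 - (a + c) - (e 1 - c) by omega]
    · rw [if_neg h2]
      by_cases h3 : a + c ≤ e 0 ∧ c ≤ e 1
      · rw [if_pos h3, coeff_Sop]
        simp only [idx2_apply0, idx2_apply1]
        rw [if_neg (by omega)]
      · rw [if_neg h3]
  · rw [if_neg h, coeffQZ]
    by_cases h3 : a + c ≤ e 0 ∧ c ≤ e 1
    · rw [if_pos h3, coeff_Sop]
      simp only [idx2_apply0, idx2_apply1]
      rw [if_neg (by omega)]
    · rw [if_neg h3]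

lemma Sop_PQZ (m M : ℕ) : Sop (PQZ m M) = PQZ (m + 1) M := by
  have : Sop (PQZ m M) = SopHom (PQZ m M) := rfl
  rw [this, PQZ, map_prod, PQZ]
  apply Finset.prod_congr rfl
  intro i _
  have h1 : SopHom (1 - Qv ^ (m + i) * Zv) = 1 - Sop (Qv ^ (m + i) * Zv) := by
    rw [map_sub, map_one]
    rfl
  rw [h1, show (Qv ^ (m + i) * Zv : PS) = Qv ^ (m + i) * Zv ^ 1 * 1 by
      rw [pow_one, mul_one], Sop_QZ, Sop_one, pow_one, mul_one,
      show m + i + 1 = m + 1 + i by omega]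

lemma Sop_pochInf (m : ℕ) : Sop (pochInfQZ m) = pochInfQZ (m + 1) := by
  apply MvPowerSeries.ext
  intro e
  rw [coeff_Sop]
  by_cases h : e 1 ≤ e 0
  · rw [if_pos h, coeff_pochInf_eq m (e 0 + 1) _ (by rw [idx2_apply0]; omega),
      coeff_pochInf_eq (m + 1) (e 0 + 1) e (by omega), ← Sop_PQZ,
      coeff_Sop, if_pos h]
  · rw [if_neg h]
    symm
    apply coeff_pochInf_vanish
    have := Nat.le_mul_of_pos_left (e 1) (show 0 < m + 1 by omega)
    omega

lemma inv_unique' {Q u v : PS} (hu : Q * u = 1) (hv : Q * v = 1) : u = v := by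
  calc u = u * (Q * v) := by rw [hv, mul_one]
    _ = v * (Q * u) := by ring
    _ = v := by rw [hu, mul_one]

lemma Sop_invPoch (t m : ℕ) :
    Sop ((pochQ t * pochInfQZ m)⁻¹) = (pochQ t * pochInfQZ (m + 1))⁻¹ := by
  have h1 : (pochQ t * pochInfQZ (m + 1)) * Sop ((pochQ t * pochInfQZ m)⁻¹) = 1 := by
    have h2 := congrArg Sop (invPoch_cancel t m)
    rw [Sop_mul, Sop_mul, Sop_one, Sop_Qonly (Qonly_pochQ t), Sop_pochInf] at h2
    exact h2
  exact inv_unique' h1 (invPoch_cancel t (m + 1))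

lemma cross_inv (P Q X Y : PS) (hP : P * P⁻¹ = 1) (hQ : Q * Q⁻¹ = 1) (h : X * Q = Y * P) :
    X * P⁻¹ = Y * Q⁻¹ := by
  have h2 : X * Q * (P⁻¹ * Q⁻¹) = Y * P * (P⁻¹ * Q⁻¹) := by rw [h]
  calc X * P⁻¹ = X * P⁻¹ * (Q * Q⁻¹) := by rw [hQ, mul_one]
    _ = X * Q * (P⁻¹ * Q⁻¹) := by ring
    _ = Y * P * (P⁻¹ * Q⁻¹) := h2
    _ = Y * Q⁻¹ * (P * P⁻¹) := by ring
    _ = Y * Q⁻¹ := by rw [hP, mul_one]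

end Aux3
noncomputable section Aux4
open MvPowerSeries

lemma half_eq {X Y A B c : ℕ} (hX : X = 2 * A) (hY : Y = 2 * B) (h : A = B + c) :
    X / 2 = Y / 2 + c := by
  subst hX
  subst hY
  rw [Nat.mul_div_cancel_left A (by norm_num : 0 < 2),
    Nat.mul_div_cancel_left B (by norm_num : 0 < 2), h]

lemma D1 (n : ℕ) : 3 * n * (n + 1) / 2 = n * (3 * n - 1) / 2 + 2 * n := by
  rcases n with _ | n'
  · norm_num
  rw [show 3 * (n' + 1) - 1 = 3 * n' + 2 by omega]
  rcases Nat.even_or_odd n' with ⟨m, hm⟩ | ⟨m, hm⟩ <;> subst hm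
  · exact half_eq (A := 3 * (2 * m + 1) * (m + 1)) (B := (2 * m + 1) * (3 * m + 1))
      (by ring) (by ring) (by ring)
  · exact half_eq (A := 3 * (m + 1) * (2 * m + 3)) (B := (m + 1) * (6 * m + 5))
      (by ring) (by ring) (by ring)

lemma D2 (m : ℕ) : (m + 1) * (3 * (m + 1) - 1) / 2 = 3 * m * (m + 1) / 2 + (m + 1) := by
  rw [show 3 * (m + 1) - 1 = 3 * m + 2 by omega]
  rcases Nat.even_or_odd m with ⟨r, hr⟩ | ⟨r, hr⟩ <;> subst hr
  · exact half_eq (A := (2 * r + 1) * (3 * r + 1)) (B := 3 * r * (2 * r + 1))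
      (by ring) (by ring) (by ring)
  · exact half_eq (A := (r + 1) * (6 * r + 5)) (B := 3 * (2 * r + 1) * (r + 1))
      (by ring) (by ring) (by ring)

lemma Sop_smul (r : ℂ) (f : PS) : Sop (r • f) = r • Sop f := by
  apply MvPowerSeries.ext
  intro e
  simp only [MvPowerSeries.coeff_smul, coeff_Sop]
  split_ifs <;> simp

/-- the series terms of the statement -/
def tOne (k b n : ℕ) : PS :=
  (-1 : ℂ) ^ (n + 1) •
    (Qv ^ (n ^ 2 * k + n * b + 3 * n * (n + 1) / 2) * Zv ^ (n * k + b + n + 1) *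
      (pochQ n * pochInfQZ n)⁻¹)

def tTwo (k b n : ℕ) : PS :=
  (-1 : ℂ) ^ n •
    (Qv ^ (n ^ 2 * k - n * b + n * (3 * n - 1) / 2) * Zv ^ (n * k + n) *
      (pochQ n * pochInfQZ n)⁻¹)

def uOne (k n : ℕ) : PS :=
  (-1 : ℂ) ^ n •
    (Qv ^ (n ^ 2 * k + n * (3 * n - 1) / 2 + n) * Zv ^ (n * k + n) *
      (pochQ n * pochInfQZ n)⁻¹)

lemma pochQ_succ (m : ℕ) : pochQ (m + 1) = pochQ m * (1 - Qv ^ (m + 1)) :=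
  Finset.prod_range_succ _ _

lemma INV1 (n : ℕ) : (pochQ n * pochInfQZ (n + 1))⁻¹ =
    (1 - Qv ^ n * Zv) * (pochQ n * pochInfQZ n)⁻¹ := by
  have h := cross_inv (pochQ n * pochInfQZ (n + 1)) (pochQ n * pochInfQZ n) 1 (1 - Qv ^ n * Zv)
    (invPoch_cancel n (n + 1)) (invPoch_cancel n n) ?_
  · rw [one_mul] at h
    exact h
  · rw [one_mul]
    nth_rewrite 1 [pochInf_factor n]
    ring

lemma INV2 (m : ℕ) : (pochQ m * pochInfQZ (m + 1))⁻¹ =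
    (1 - Qv ^ (m + 1)) * (pochQ (m + 1) * pochInfQZ (m + 1))⁻¹ := by
  have h := cross_inv (pochQ m * pochInfQZ (m + 1)) (pochQ (m + 1) * pochInfQZ (m + 1)) 1
    (1 - Qv ^ (m + 1)) (invPoch_cancel m (m + 1)) (invPoch_cancel (m + 1) (m + 1)) ?_
  · rw [one_mul] at h
    exact h
  · rw [one_mul, pochQ_succ]
    ring

lemma LemB1 (k β n : ℕ) (hβ1 : 1 ≤ β) (hβk : β ≤ k) :
    Zv ^ β * Sop (tTwo k (k - β) n) = tOne k β n - tOne k (β - 1) n := by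
  have hmul : n * (k - β) + n * β = n * k := by
    rw [← Nat.mul_add, Nat.sub_add_cancel hβk]
  have hnk : n * k ≤ n ^ 2 * k := by
    have h1 : n ≤ n ^ 2 := Nat.le_self_pow (by norm_num) n
    exact Nat.mul_le_mul_right k h1
  have hE : (n ^ 2 * k - n * (k - β) + n * (3 * n - 1) / 2) + (n * k + n)
      = n ^ 2 * k + n * β + n * (3 * n - 1) / 2 + n := by
    omega
  have hq1 : n ^ 2 * k + n * β + 3 * n * (n + 1) / 2
      = n ^ 2 * k + n * β + n * (3 * n - 1) / 2 + 2 * n := by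
    have := D1 n
    omega
  have hq2 : n ^ 2 * k + n * (β - 1) + 3 * n * (n + 1) / 2
      = n ^ 2 * k + n * β + n * (3 * n - 1) / 2 + n := by
    have h2 := D1 n
    have h3 : n * (β - 1) + n = n * β := by
      rw [← Nat.mul_succ, Nat.succ_eq_add_one, Nat.sub_add_cancel hβ1]
    omega
  have hz2 : n * k + (β - 1) + n + 1 = n * k + β + n := by omega
  have hC2 : (MvPowerSeries.C (σ := Fin 2)) ((-1 : ℂ) ^ (n + 1))
      = -(MvPowerSeries.C (σ := Fin 2)) ((-1 : ℂ) ^ n) := by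
    rw [pow_succ, map_mul]
    simp
  rw [tTwo, Sop_smul, Sop_QZ, Sop_invPoch, INV1, tOne, tOne, hE, hq1, hq2, hz2,
    smul_eq_C_mul, smul_eq_C_mul, smul_eq_C_mul, hC2]
  ring

lemma LemB2 (k β m : ℕ) (hβ1 : 1 ≤ β) (hβk : β ≤ k) :
    tTwo k β (m + 1) - tTwo k (β - 1) (m + 1) = Zv ^ β * Sop (tOne k (k - β) m) := by
  have hA : (m + 1) ^ 2 * k = m ^ 2 * k + 2 * (m * k) + k := by ring
  have hB : (m + 1) * β = m * β + β := by ring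
  have hC : m * (k - β) + m * β = m * k := by
    rw [← Nat.mul_add, Nat.sub_add_cancel hβk]
  have hD := D2 m
  have hle : m * β ≤ m * k := Nat.mul_le_mul_left _ hβk
  have hkβ : k - β + β = k := by omega
  have hq1 : (m ^ 2 * k + m * (k - β) + 3 * m * (m + 1) / 2) + (m * k + (k - β) + m + 1)
      = ((m + 1) ^ 2 * k - (m + 1) * β) + (m + 1) * (3 * (m + 1) - 1) / 2 := by
    omega
  have hq2 : (m + 1) ^ 2 * k - (m + 1) * (β - 1) + (m + 1) * (3 * (m + 1) - 1) / 2
      = ((m + 1) ^ 2 * k - (m + 1) * β) + (m + 1) * (3 * (m + 1) - 1) / 2 + (m + 1) := by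
    have h3 : (m + 1) * (β - 1) + (m + 1) = (m + 1) * β := by
      rw [← Nat.mul_succ, Nat.succ_eq_add_one, Nat.sub_add_cancel hβ1]
    omega
  have hz1 : (m + 1) * k + (m + 1) = β + (m * k + (k - β) + m + 1) := by
    have h4 : m * k + k = (m + 1) * k := by ring
    omega
  rw [tOne, Sop_smul, Sop_QZ, Sop_invPoch, INV2, tTwo, tTwo, hq1, hq2, hz1,
    smul_eq_C_mul, smul_eq_C_mul, smul_eq_C_mul]
  ring

end Aux4
noncomputable section Aux5
open MvPowerSeries

/-- the partial coefficient sums -/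
def SS (k b a c : ℕ) : ℂ :=
  ∑ n ∈ Finset.range (a + 1),
    (MvPowerSeries.coeff (idx2 a c) (tOne k b n) +
      MvPowerSeries.coeff (idx2 a c) (tTwo k b n))

lemma coeff_Sop_idx (f : PS) (a c : ℕ) :
    MvPowerSeries.coeff (idx2 a c) (Sop f) =
      if c ≤ a then MvPowerSeries.coeff (idx2 (a - c) c) f else 0 := by
  rw [coeff_Sop]
  simp only [idx2_apply0, idx2_apply1]

lemma coeff_Z_Sop (β : ℕ) (f : PS) (a c : ℕ) :
    MvPowerSeries.coeff (idx2 a c) (Zv ^ β * Sop f) =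
      if β ≤ c ∧ c - β ≤ a then
        MvPowerSeries.coeff (idx2 (a - (c - β)) (c - β)) f else 0 := by
  rw [show (Zv ^ β * Sop f : PS) = Qv ^ 0 * Zv ^ β * Sop f by rw [pow_zero, one_mul], coeffQZ]
  simp only [idx2_apply0, idx2_apply1]
  by_cases h1 : 0 ≤ a ∧ β ≤ c
  · rw [if_pos h1, coeff_Sop_idx]
    simp only [Nat.sub_zero]
    by_cases h2 : c - β ≤ a
    · rw [if_pos h2, if_pos (by omega)]
    · rw [if_neg h2, if_neg (by omega)]
  · rw [if_neg h1, if_neg (by omega)]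

lemma nle_pow2 (n k : ℕ) (hk : 1 ≤ k) (hn : 1 ≤ n) : n ≤ n ^ 2 * k := by
  have h1 : n ≤ n ^ 2 := Nat.le_self_pow (by norm_num) n
  have h2 : n ^ 2 = n ^ 2 * 1 := by ring
  calc n ≤ n ^ 2 := h1
    _ = n ^ 2 * 1 := h2
    _ ≤ n ^ 2 * k := Nat.mul_le_mul_left _ hk

lemma nle_E2 (n : ℕ) (hn : 1 ≤ n) : n ≤ n * (3 * n - 1) / 2 := by
  have h5 : 2 ≤ 3 * n - 1 := by omega
  have h6 : n * 2 ≤ n * (3 * n - 1) := Nat.mul_le_mul_left n h5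
  have h7 := Nat.div_le_div_right (c := 2) h6
  omega

lemma tOne_zero_q (k b n x y : ℕ) (hk : 1 ≤ k) (hx : x < n) :
    MvPowerSeries.coeff (idx2 x y) (tOne k b n) = 0 := by
  rw [tOne, MvPowerSeries.coeff_smul, coeffQZ, if_neg, mul_zero]
  have := nle_pow2 n k hk (by omega)
  simp only [idx2_apply0, idx2_apply1]
  omega

lemma tOne_zero_z (k b n x : ℕ) :
    MvPowerSeries.coeff (idx2 x 0) (tOne k b n) = 0 := by
  rw [tOne, MvPowerSeries.coeff_smul, coeffQZ, if_neg, mul_zero]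
  simp only [idx2_apply0, idx2_apply1]
  omega

lemma tTwo_zero_q (k b n x y : ℕ) (hk : 1 ≤ k) (hx : x < n) :
    MvPowerSeries.coeff (idx2 x y) (tTwo k b n) = 0 := by
  rw [tTwo, MvPowerSeries.coeff_smul, coeffQZ, if_neg, mul_zero]
  have := nle_E2 n (by omega)
  simp only [idx2_apply0, idx2_apply1]
  omega

lemma tTwo_zero_z (k b n x : ℕ) (hn : 1 ≤ n) :
    MvPowerSeries.coeff (idx2 x 0) (tTwo k b n) = 0 := by
  rw [tTwo, MvPowerSeries.coeff_smul, coeffQZ, if_neg, mul_zero]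
  simp only [idx2_apply0, idx2_apply1]
  omega

lemma rowPQZ (m M x : ℕ) :
    MvPowerSeries.coeff (idx2 x 0) (PQZ m M) = if x = 0 then 1 else 0 := by
  induction M with
  | zero =>
    rw [PQZ, Finset.prod_range_zero, MvPowerSeries.coeff_one]
    by_cases hx : x = 0
    · rw [if_pos hx, if_pos (by rw [fin2_eq_zero_iff]; simp [hx])]
    · rw [if_neg hx, if_neg (by rw [fin2_eq_zero_iff]; simp [hx])]
  | succ M ih =>
    have hstep : PQZ m (M + 1) = PQZ m M * (1 - Qv ^ (m + M) * Zv) :=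
      Finset.prod_range_succ _ _
    rw [hstep, mul_one_sub, map_sub, coeff_mul_QZ,
      if_neg (by simp only [idx2_apply1]; omega), sub_zero, ih]

lemma row_pochInf (x : ℕ) :
    MvPowerSeries.coeff (idx2 x 0) (pochInfQZ 0) = if x = 0 then 1 else 0 := by
  rw [coeff_pochInfQZ, rowPQZ]

lemma base_inv0 (x : ℕ) :
    MvPowerSeries.coeff (idx2 x 0) ((pochQ 0 * pochInfQZ 0)⁻¹) = if x = 0 then 1 else 0 := by
  have key := invPoch_cancel 0 0
  have hrow : ∀ u : Fin 2 →₀ ℕ, u 1 = 0 →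
      MvPowerSeries.coeff u (pochQ 0 * pochInfQZ 0) = if u 0 = 0 then 1 else 0 := by
    intro u hu
    have hpq : pochQ 0 = 1 := Finset.prod_range_zero _
    have he : u = idx2 (u 0) 0 := by apply fin2_ext <;> simp [hu]
    have h2 : MvPowerSeries.coeff u (pochInfQZ 0)
        = MvPowerSeries.coeff (idx2 (u 0) 0) (pochInfQZ 0) := by rw [← he]
    rw [hpq, one_mul, h2, row_pochInf]
  have hsum : ∑ p ∈ Finset.HasAntidiagonal.antidiagonal (idx2 x 0),
      MvPowerSeries.coeff p.1 (pochQ 0 * pochInfQZ 0) *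
        MvPowerSeries.coeff p.2 ((pochQ 0 * pochInfQZ 0)⁻¹) =
      MvPowerSeries.coeff (idx2 x 0) ((pochQ 0 * pochInfQZ 0)⁻¹) := by
    rw [Finset.sum_eq_single ((0 : Fin 2 →₀ ℕ), idx2 x 0)]
    · dsimp only
      rw [MvPowerSeries.coeff_zero_eq_constantCoeff_apply, map_mul, constCoeff_pochQ,
        constCoeff_pochInf, mul_one, one_mul]
    · intro p hp hne
      obtain ⟨h0, h1c⟩ := antidiag_comp hp
      simp only [idx2_apply0, idx2_apply1] at h0 h1c
      rw [hrow p.1 (by omega)]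
      by_cases hp1 : p.1 0 = 0
      · exfalso
        apply hne
        have hp1z : p.1 = 0 := by rw [fin2_eq_zero_iff]; omega
        have hp2 : p.2 = idx2 x 0 := by
          apply fin2_ext
          · rw [idx2_apply0]; omega
          · rw [idx2_apply1]; omega
        rw [Prod.ext_iff]
        exact ⟨hp1z, hp2⟩
      · rw [if_neg hp1, zero_mul]
    · intro habs
      exfalso
      apply habs
      rw [Finset.HasAntidiagonal.mem_antidiagonal, zero_add]
  have h1 := congrArg (MvPowerSeries.coeff (idx2 x 0)) key
  rw [MvPowerSeries.coeff_mul, hsum, MvPowerSeries.coeff_one] at h1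
  rw [h1]
  by_cases hx : x = 0
  · rw [if_pos hx, if_pos (by rw [fin2_eq_zero_iff]; simp [hx])]
  · rw [if_neg hx, if_neg (by rw [fin2_eq_zero_iff]; simp [hx])]

lemma AC0 (k b a : ℕ) : SS k b a 0 = if a = 0 then 1 else 0 := by
  rw [SS]
  have hterm : ∀ n ∈ Finset.range (a + 1),
      (MvPowerSeries.coeff (idx2 a 0) (tOne k b n) +
        MvPowerSeries.coeff (idx2 a 0) (tTwo k b n)) =
      if n = 0 then (if a = 0 then (1 : ℂ) else 0) else 0 := by
    intro n _
    rcases n with _ | n'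
    · rw [tOne_zero_z, zero_add, if_pos rfl, tTwo]
      rw [show (0 ^ 2 * k - 0 * b + 0 * (3 * 0 - 1) / 2 : ℕ) = 0 by norm_num,
        show (0 * k + 0 : ℕ) = 0 by norm_num]
      rw [MvPowerSeries.coeff_smul, pow_zero, one_mul, coeffQZ, if_pos (by simp)]
      rw [show ((idx2 a 0) 0 - 0) = a by simp, show ((idx2 a 0) 1 - 0) = 0 by simp]
      exact base_inv0 a
    · rw [tOne_zero_z, tTwo_zero_z _ _ _ _ (by omega), zero_add, if_neg (by omega)]
  rw [Finset.sum_congr rfl hterm, Finset.sum_ite_eq' (Finset.range (a + 1)) 0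
    (fun _ => if a = 0 then (1:ℂ) else 0), if_pos (by simp)]

end Aux5
noncomputable section Aux6
open MvPowerSeries

lemma LemA1 (k n : ℕ) : Sop (tTwo k k n) = uOne k n + tOne k 0 n := by
  have hnk : n * k ≤ n ^ 2 * k := by
    have h1 : n ≤ n ^ 2 := Nat.le_self_pow (by norm_num) n
    exact Nat.mul_le_mul_right k h1
  have hE : (n ^ 2 * k - n * k + n * (3 * n - 1) / 2) + (n * k + n)
      = n ^ 2 * k + n * (3 * n - 1) / 2 + n := by omega
  have hq0 : n ^ 2 * k + n * 0 + 3 * n * (n + 1) / 2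
      = n ^ 2 * k + n * (3 * n - 1) / 2 + n + n := by
    have h2 := D1 n
    have h3 : n * 0 = 0 := by ring
    omega
  have hC2 : (MvPowerSeries.C (σ := Fin 2)) ((-1 : ℂ) ^ (n + 1))
      = -(MvPowerSeries.C (σ := Fin 2)) ((-1 : ℂ) ^ n) := by
    rw [pow_succ ((-1 : ℂ)) n, map_mul]
    simp
  rw [tTwo, Sop_smul, Sop_QZ, Sop_invPoch, INV1, uOne, tOne, hE, hq0,
    smul_eq_C_mul, smul_eq_C_mul, smul_eq_C_mul, hC2]
  ring

lemma LemA2 (k m : ℕ) : tTwo k 0 (m + 1) = uOne k (m + 1) + Sop (tOne k k m) := by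
  have hA : (m + 1) ^ 2 * k = m ^ 2 * k + 2 * (m * k) + k := by ring
  have hD := D2 m
  have hqS : (m ^ 2 * k + m * k + 3 * m * (m + 1) / 2) + (m * k + k + m + 1)
      = (m + 1) ^ 2 * k + (m + 1) * (3 * (m + 1) - 1) / 2 := by omega
  have hq0 : (m + 1) ^ 2 * k - (m + 1) * 0 + (m + 1) * (3 * (m + 1) - 1) / 2
      = (m + 1) ^ 2 * k + (m + 1) * (3 * (m + 1) - 1) / 2 := by
    have h3 : (m + 1) * 0 = 0 := by ring
    omega
  rw [tTwo, uOne, tOne, Sop_smul, Sop_QZ, Sop_invPoch, INV2, hqS, hq0,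
    smul_eq_C_mul, smul_eq_C_mul, smul_eq_C_mul]
  ring

lemma uOne_zero (k b : ℕ) : uOne k 0 = tTwo k b 0 := by
  rw [uOne, tTwo, show (0 ^ 2 * k + 0 * (3 * 0 - 1) / 2 + 0 : ℕ) = 0 by norm_num,
    show (0 * k + 0 : ℕ) = 0 by norm_num,
    show (0 ^ 2 * k - 0 * b + 0 * (3 * 0 - 1) / 2 : ℕ) = 0 by norm_num]

lemma tTwo_zero (k b b' : ℕ) : tTwo k b 0 = tTwo k b' 0 := by
  rw [← uOne_zero k b, ← uOne_zero k b']

lemma serA (k n : ℕ) : tOne k 0 n + tTwo k 0 n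
    = Sop (tTwo k k n) + (if n = 0 then (0 : PS) else Sop (tOne k k (n - 1))) := by
  rcases n with _ | m
  · rw [if_pos rfl, add_zero, LemA1, uOne_zero k 0]
    ring
  · rw [if_neg (by omega), LemA1, LemA2]
    have h1 : (m + 1 : ℕ) - 1 = m := rfl
    rw [h1]
    ring

lemma serB (k b n : ℕ) (hbk : b + 1 ≤ k) :
    tOne k (b + 1) n + tTwo k (b + 1) n
      = (tOne k b n + tTwo k b n) +
        (Zv ^ (b + 1) * Sop (tTwo k (k - (b + 1)) n) +
          (if n = 0 then (0 : PS) else Zv ^ (b + 1) * Sop (tOne k (k - (b + 1)) (n - 1)))) := by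
  have hB1 := LemB1 k (b + 1) n (by omega) hbk
  rw [show (b + 1 : ℕ) - 1 = b from rfl] at hB1
  rcases n with _ | m
  · rw [if_pos rfl, add_zero, hB1, tTwo_zero k (b + 1) b]
    ring
  · have hB2 := LemB2 k (b + 1) m (by omega) hbk
    rw [show (b + 1 : ℕ) - 1 = b from rfl] at hB2
    rw [if_neg (by omega), hB1, show (m + 1 : ℕ) - 1 = m from rfl, ← hB2]
    ring

lemma lastOne_zero (k b a c : ℕ) (hk : 1 ≤ k) (hca : c ≤ a) :
    MvPowerSeries.coeff (idx2 (a - c) c) (tOne k b a) = 0 := by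
  rcases Nat.eq_zero_or_pos c with hc | hc
  · subst hc
    exact tOne_zero_z k b a (a - 0)
  · exact tOne_zero_q k b a (a - c) c hk (by omega)

lemma AC1 (k a c : ℕ) (hk : 1 ≤ k) :
    SS k 0 a c = if c ≤ a then SS k k (a - c) c else 0 := by
  have step1 : SS k 0 a c =
      ∑ n ∈ Finset.range (a + 1),
        (MvPowerSeries.coeff (idx2 a c) (Sop (tTwo k k n)) +
          MvPowerSeries.coeff (idx2 a c)
            (if n = 0 then (0 : PS) else Sop (tOne k k (n - 1)))) := by
    rw [SS]
    apply Finset.sum_congr rfl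
    intro n _
    rw [← map_add, ← map_add, serA k n]
  have step2 : ∑ n ∈ Finset.range (a + 1),
      MvPowerSeries.coeff (idx2 a c)
        ((if n = 0 then (0 : PS) else Sop (tOne k k (n - 1)))) =
      ∑ n ∈ Finset.range a, MvPowerSeries.coeff (idx2 a c) (Sop (tOne k k n)) := by
    rw [Finset.sum_range_succ', if_pos rfl, map_zero, add_zero]
    apply Finset.sum_congr rfl
    intro n _
    rw [if_neg (by omega), show (n + 1 : ℕ) - 1 = n from rfl]
  have step3 : ∑ n ∈ Finset.range a, MvPowerSeries.coeff (idx2 a c) (Sop (tOne k k n)) =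
      ∑ n ∈ Finset.range (a + 1), MvPowerSeries.coeff (idx2 a c) (Sop (tOne k k n)) := by
    rw [Finset.sum_range_succ]
    rw [coeff_Sop_idx]
    split_ifs with hca
    · rw [lastOne_zero k k a c hk hca, add_zero]
    · rw [add_zero]
  rw [step1, Finset.sum_add_distrib, step2, step3, ← Finset.sum_add_distrib]
  by_cases hca : c ≤ a
  · rw [if_pos hca, SS]
    have htrim : ∑ n ∈ Finset.range (a - c + 1),
        (MvPowerSeries.coeff (idx2 (a - c) c) (tOne k k n) +
          MvPowerSeries.coeff (idx2 (a - c) c) (tTwo k k n)) =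
        ∑ n ∈ Finset.range (a + 1),
        (MvPowerSeries.coeff (idx2 (a - c) c) (tOne k k n) +
          MvPowerSeries.coeff (idx2 (a - c) c) (tTwo k k n)) := by
      apply Finset.sum_subset (by rw [Finset.range_subset_range]; omega)
      intro n _ hn
      rw [Finset.mem_range, not_lt] at hn
      rw [tOne_zero_q k k n (a - c) c hk (by omega),
        tTwo_zero_q k k n (a - c) c hk (by omega), add_zero]
    rw [htrim]
    apply Finset.sum_congr rfl
    intro n _
    rw [coeff_Sop_idx, coeff_Sop_idx, if_pos hca, if_pos hca]
    ring
  · rw [if_neg hca]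
    apply Finset.sum_eq_zero
    intro n _
    rw [coeff_Sop_idx, coeff_Sop_idx, if_neg hca, if_neg hca, add_zero]

lemma AC2 (k b a c : ℕ) (hk : 1 ≤ k) (hbk : b + 1 ≤ k) :
    SS k (b + 1) a c = SS k b a c +
      (if b + 1 ≤ c ∧ c - (b + 1) ≤ a then
        SS k (k - (b + 1)) (a - (c - (b + 1))) (c - (b + 1)) else 0) := by
  set β := b + 1 with hβ
  have step1 : SS k β a c = SS k b a c +
      (∑ n ∈ Finset.range (a + 1),
        (MvPowerSeries.coeff (idx2 a c) (Zv ^ β * Sop (tTwo k (k - β) n)) +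
          MvPowerSeries.coeff (idx2 a c)
            (if n = 0 then (0 : PS) else Zv ^ β * Sop (tOne k (k - β) (n - 1))))) := by
    rw [SS, SS, ← Finset.sum_add_distrib]
    apply Finset.sum_congr rfl
    intro n _
    rw [← map_add, ← map_add, ← map_add, ← map_add, serB k b n hbk]
  have step2 : ∑ n ∈ Finset.range (a + 1),
      MvPowerSeries.coeff (idx2 a c)
        ((if n = 0 then (0 : PS) else Zv ^ β * Sop (tOne k (k - β) (n - 1)))) =
      ∑ n ∈ Finset.range a,
        MvPowerSeries.coeff (idx2 a c) (Zv ^ β * Sop (tOne k (k - β) n)) := by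
    rw [Finset.sum_range_succ', if_pos rfl, map_zero, add_zero]
    apply Finset.sum_congr rfl
    intro n _
    rw [if_neg (by omega), show (n + 1 : ℕ) - 1 = n from rfl]
  have step3 : ∑ n ∈ Finset.range a,
      MvPowerSeries.coeff (idx2 a c) (Zv ^ β * Sop (tOne k (k - β) n)) =
      ∑ n ∈ Finset.range (a + 1),
        MvPowerSeries.coeff (idx2 a c) (Zv ^ β * Sop (tOne k (k - β) n)) := by
    rw [Finset.sum_range_succ, coeff_Z_Sop]
    split_ifs with hca
    · rw [lastOne_zero k (k - β) a (c - β) hk (by omega)]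
      · rw [add_zero]
    · rw [add_zero]
  rw [step1, Finset.sum_add_distrib, step2, step3, ← Finset.sum_add_distrib]
  congr 1
  by_cases hca : β ≤ c ∧ c - β ≤ a
  · rw [if_pos hca, SS]
    have htrim : ∑ n ∈ Finset.range (a - (c - β) + 1),
        (MvPowerSeries.coeff (idx2 (a - (c - β)) (c - β)) (tOne k (k - β) n) +
          MvPowerSeries.coeff (idx2 (a - (c - β)) (c - β)) (tTwo k (k - β) n)) =
        ∑ n ∈ Finset.range (a + 1),
        (MvPowerSeries.coeff (idx2 (a - (c - β)) (c - β)) (tOne k (k - β) n) +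
          MvPowerSeries.coeff (idx2 (a - (c - β)) (c - β)) (tTwo k (k - β) n)) := by
      apply Finset.sum_subset (by rw [Finset.range_subset_range]; omega)
      intro n _ hn
      rw [Finset.mem_range, not_lt] at hn
      rw [tOne_zero_q k (k - β) n (a - (c - β)) (c - β) hk (by omega),
        tTwo_zero_q k (k - β) n (a - (c - β)) (c - β) hk (by omega), add_zero]
    rw [htrim]
    apply Finset.sum_congr rfl
    intro n _
    rw [coeff_Z_Sop, coeff_Z_Sop, if_pos hca, if_pos hca]
    ring
  · rw [if_neg hca]
    apply Finset.sum_eq_zero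
    intro n _
    rw [coeff_Z_Sop, coeff_Z_Sop, if_neg hca, if_neg hca, add_zero]

end Aux6
noncomputable section Aux7
open MvPowerSeries

/-- membership predicate of the configuration sets -/
def CsetP (k b a c : ℕ) (x : ℕ → ℕ) : Prop :=
  windowOK k 2 x ∧ boundOK 2 (fun _ => b) x ∧ (∀ i, a + 1 ≤ i → x i = 0) ∧
    (∑ j ∈ Finset.range (a + 1), j * x j = a) ∧ (∑ j ∈ Finset.range (a + 1), x j = c)

/-- with prescribed first entry -/
def DsetP (k v a c : ℕ) (x : ℕ → ℕ) : Prop :=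
  windowOK k 2 x ∧ x 0 = v ∧ (∀ i, a + 1 ≤ i → x i = 0) ∧
    (∑ j ∈ Finset.range (a + 1), j * x j = a) ∧ (∑ j ∈ Finset.range (a + 1), x j = c)

def CC (k b a c : ℕ) : ℂ := (Nat.card {x : ℕ → ℕ // CsetP k b a c x} : ℂ)

lemma windowOK2 {k : ℕ} {x : ℕ → ℕ} : windowOK k 2 x ↔ ∀ j, x j + x (j + 1) ≤ k := by
  have hs : ∀ j, ∑ t ∈ Finset.range 2, x (j + t) = x j + x (j + 1) := by
    intro j
    rw [Finset.sum_range_succ, Finset.sum_range_one, Nat.add_zero]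
  constructor
  · intro h j
    rw [← hs j]
    exact h j
  · intro h j
    show ∑ t ∈ Finset.range 2, x (j + t) ≤ k
    rw [hs j]
    exact h j

lemma boundOK2 {b : ℕ → ℕ} {x : ℕ → ℕ} : boundOK 2 b x ↔ x 0 ≤ b 0 := by
  constructor
  · intro h
    have := h 0 (by norm_num)
    rwa [Finset.sum_range_one] at this
  · intro h i hi
    have hi0 : i = 0 := by omega
    subst hi0
    rwa [Finset.sum_range_one]

lemma finite_conf {Φ : (ℕ → ℕ) → Prop} (k a : ℕ)
    (h : ∀ x, Φ x → (∀ j, x j ≤ k) ∧ ∀ i, a + 1 ≤ i → x i = 0) :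
    Finite {x : ℕ → ℕ // Φ x} := by
  apply Finite.of_injective (α := {x : ℕ → ℕ // Φ x})
    (f := fun x (i : Fin (a + 1)) => (⟨x.1 i, by have := (h x.1 x.2).1 i; omega⟩ : Fin (k + 1)))
  intro x y hxy
  apply Subtype.ext
  funext i
  rcases le_or_gt i a with hi | hi
  · have h2 := congrFun hxy ⟨i, by omega⟩
    have h3 := congrArg Fin.val h2
    simpa using h3
  · rw [(h x.1 x.2).2 i (by omega), (h y.1 y.2).2 i (by omega)]

lemma xle {k : ℕ} {x : ℕ → ℕ} (hw : windowOK k 2 x) : ∀ j, x j ≤ k := by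
  intro j
  have := windowOK2.mp hw j
  omega

lemma Cfin (k b a c : ℕ) : Finite {x : ℕ → ℕ // CsetP k b a c x} :=
  finite_conf k a (fun x hx => ⟨xle hx.1, hx.2.2.1⟩)

lemma Dfin (k v a c : ℕ) : Finite {x : ℕ → ℕ // DsetP k v a c x} :=
  finite_conf k a (fun x hx => ⟨xle hx.1, hx.2.2.1⟩)

lemma sum_trim {g : ℕ → ℕ} {N M : ℕ} (hNM : N ≤ M) (hz : ∀ i, N ≤ i → i < M → g i = 0) :
    ∑ j ∈ Finset.range M, g j = ∑ j ∈ Finset.range N, g j := by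
  symm
  apply Finset.sum_subset (Finset.range_subset_range.2 hNM)
  intro i hiM hiN
  rw [Finset.mem_range] at hiM
  rw [Finset.mem_range, not_lt] at hiN
  exact hz i hiN hiM

lemma support_bound {a c v : ℕ} (x : ℕ → ℕ) (hx0 : x 0 = v)
    (hq : ∑ j ∈ Finset.range (a + 1), j * x j = a)
    (hc : ∑ j ∈ Finset.range (a + 1), x j = c) :
    ∀ m, m ∈ Finset.range (a + 1) → a - (c - v) + 2 ≤ m → x m = 0 := by
  intro m hm hm2
  by_contra hxm
  have hm1 : 1 ≤ m := by omega
  have h0m : (0 : ℕ) ∈ (Finset.range (a + 1)).erase m := by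
    rw [Finset.mem_erase]
    exact ⟨by omega, by rw [Finset.mem_range]; omega⟩
  have hq1 : ∑ j ∈ Finset.range (a + 1), j * x j
      = m * x m + ∑ j ∈ (Finset.range (a + 1)).erase m, j * x j :=
    (Finset.add_sum_erase _ _ hm).symm
  have hq2 : ∑ j ∈ (Finset.range (a + 1)).erase m, j * x j
      = 0 * x 0 + ∑ j ∈ ((Finset.range (a + 1)).erase m).erase 0, j * x j :=
    (Finset.add_sum_erase _ _ h0m).symm
  have hc1 : ∑ j ∈ Finset.range (a + 1), x j
      = x m + ∑ j ∈ (Finset.range (a + 1)).erase m, x j :=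
    (Finset.add_sum_erase _ _ hm).symm
  have hc2 : ∑ j ∈ (Finset.range (a + 1)).erase m, x j
      = x 0 + ∑ j ∈ ((Finset.range (a + 1)).erase m).erase 0, x j :=
    (Finset.add_sum_erase _ _ h0m).symm
  have hmono : ∑ j ∈ ((Finset.range (a + 1)).erase m).erase 0, x j
      ≤ ∑ j ∈ ((Finset.range (a + 1)).erase m).erase 0, j * x j := by
    apply Finset.sum_le_sum
    intro i hi
    have hne : i ≠ 0 := (Finset.mem_erase.mp hi).1
    calc x i = 1 * x i := (one_mul _).symm
      _ ≤ i * x i := Nat.mul_le_mul_right _ (by omega)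
  obtain ⟨m', rfl⟩ : ∃ m', m = m' + 1 := ⟨m - 1, by omega⟩
  obtain ⟨t, ht⟩ : ∃ t, x (m' + 1) = t + 1 := ⟨x (m' + 1) - 1, by omega⟩
  have hprod : (m' + 1) * (t + 1) = m' * t + m' + t + 1 := by ring
  rw [ht] at hq1 hc1
  rw [hx0] at hc2
  omega

/-- the shift bijection -/
def shift_equiv (k v a c : ℕ) (hvk : v ≤ k) (hvc : v ≤ c) (hca : c - v ≤ a) :
    {x : ℕ → ℕ // DsetP k v a c x} ≃
      {y : ℕ → ℕ // CsetP k (k - v) (a - (c - v)) (c - v) y} := by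
  refine
    { toFun := fun x => ⟨fun j => x.1 (j + 1), ?_⟩,
      invFun := fun y => ⟨fun m => if m = 0 then v else y.1 (m - 1), ?_⟩,
      left_inv := ?_, right_inv := ?_ }
  · -- toFun membership
    obtain ⟨hw, hx0, htail, hq, hc⟩ := x.2
    have hzero : ∀ m, a - (c - v) + 2 ≤ m → x.1 m = 0 := by
      intro m hm
      rcases le_or_gt (a + 1) m with h1 | h1
      · exact htail m h1
      · exact support_bound x.1 hx0 hq hc m (by rw [Finset.mem_range]; omega) hm
    have e1 : ∑ j ∈ Finset.range (a + 1), x.1 (j + 1)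
        = ∑ j ∈ Finset.range (a - (c - v) + 1), x.1 (j + 1) :=
      sum_trim (by omega) (fun i h1 h2 => hzero (i + 1) (by omega))
    have e2 : ∑ j ∈ Finset.range (a + 1 + 1), x.1 j
        = ∑ j ∈ Finset.range (a + 1), x.1 (j + 1) + x.1 0 :=
      Finset.sum_range_succ' _ _
    have e3 : ∑ j ∈ Finset.range (a + 1 + 1), x.1 j
        = ∑ j ∈ Finset.range (a + 1), x.1 j :=
      sum_trim (by omega) (fun i h1 h2 => htail i (by omega))
    refine ⟨?_, ?_, ?_, ?_, ?_⟩
    · rw [windowOK2]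
      intro j
      exact windowOK2.mp hw (j + 1)
    · rw [boundOK2]
      have h1 := windowOK2.mp hw 0
      show x.1 (0 + 1) ≤ k - v
      omega
    · intro i hi
      exact hzero (i + 1) (by omega)
    · show ∑ j ∈ Finset.range (a - (c - v) + 1), j * x.1 (j + 1) = a - (c - v)
      have f1 : ∑ j ∈ Finset.range (a + 1), j * x.1 (j + 1)
          = ∑ j ∈ Finset.range (a - (c - v) + 1), j * x.1 (j + 1) :=
        sum_trim (by omega) (fun i h1 h2 => by rw [hzero (i + 1) (by omega), Nat.mul_zero])
      have f2 : ∑ j ∈ Finset.range (a + 1 + 1), j * x.1 j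
          = ∑ j ∈ Finset.range (a + 1), (j + 1) * x.1 (j + 1) + 0 * x.1 0 :=
        Finset.sum_range_succ' _ _
      have f3 : ∑ j ∈ Finset.range (a + 1 + 1), j * x.1 j
          = ∑ j ∈ Finset.range (a + 1), j * x.1 j :=
        sum_trim (by omega) (fun i h1 h2 => by rw [htail i (by omega), Nat.mul_zero])
      have f4 : ∑ j ∈ Finset.range (a + 1), (j + 1) * x.1 (j + 1)
          = ∑ j ∈ Finset.range (a + 1), j * x.1 (j + 1)
            + ∑ j ∈ Finset.range (a + 1), x.1 (j + 1) := by
        rw [← Finset.sum_add_distrib]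
        apply Finset.sum_congr rfl
        intro j _
        ring
      omega
    · show ∑ j ∈ Finset.range (a - (c - v) + 1), x.1 (j + 1) = c - v
      omega
  · -- invFun membership
    obtain ⟨hw, hbd, htail, hq, hc⟩ := y.2
    rw [boundOK2] at hbd
    have hY : ∀ j, a - (c - v) + 1 ≤ j → y.1 j = 0 := htail
    have hyz : c - v = 0 → ∀ j, y.1 j = 0 := by
      intro h0 j
      rcases le_or_gt (a - (c - v) + 1) j with h1 | h1
      · exact hY j h1
      · have hzero : ∀ i ∈ Finset.range (a - (c - v) + 1), y.1 i = 0 := by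
          rw [← Finset.sum_eq_zero_iff, hc, h0]
        exact hzero j (by rw [Finset.mem_range]; omega)
    have hcsum : ∑ j ∈ Finset.range (a + 1), (if j = 0 then v else y.1 (j - 1))
        = ∑ j ∈ Finset.range a, y.1 j + v := by
      have hb : ∀ j ∈ Finset.range a,
          (if j + 1 = 0 then v else y.1 (j + 1 - 1)) = y.1 j := fun j _ => by
        rw [if_neg (by omega : ¬(j + 1 = 0)), show (j + 1 : ℕ) - 1 = j from rfl]
      rw [Finset.sum_range_succ', Finset.sum_congr rfl hb, if_pos rfl]
    have hysum : ∑ j ∈ Finset.range a, y.1 j = c - v := by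
      rcases Nat.eq_zero_or_pos (c - v) with hcv | hcv
      · rw [Finset.sum_eq_zero (fun i _ => hyz hcv i), hcv]
      · rw [sum_trim (g := fun j => y.1 j) (N := a - (c - v) + 1) (by omega)
          (fun i hi1 hi2 => hY i (by omega)), hc]
    refine ⟨?_, ?_, ?_, ?_, ?_⟩
    · rw [windowOK2]
      intro j
      rcases j with _ | j'
      · show (if (0 : ℕ) = 0 then v else y.1 (0 - 1)) +
          (if (0 + 1 : ℕ) = 0 then v else y.1 (0 + 1 - 1)) ≤ k
        rw [if_pos rfl, if_neg (by omega : ¬(0 + 1 : ℕ) = 0)]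
        have hy0 : y.1 (0 + 1 - 1) = y.1 0 := rfl
        rw [hy0]
        omega
      · show (if (j' + 1 : ℕ) = 0 then v else y.1 (j' + 1 - 1)) +
          (if (j' + 1 + 1 : ℕ) = 0 then v else y.1 (j' + 1 + 1 - 1)) ≤ k
        rw [if_neg (by omega : ¬(j' + 1 : ℕ) = 0), if_neg (by omega : ¬(j' + 1 + 1 : ℕ) = 0),
          show (j' + 1 : ℕ) - 1 = j' from rfl, show (j' + 1 + 1 : ℕ) - 1 = j' + 1 from rfl]
        exact windowOK2.mp hw j'
    · show (if (0 : ℕ) = 0 then v else y.1 (0 - 1)) = v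
      rw [if_pos rfl]
    · intro i hi
      show (if i = 0 then v else y.1 (i - 1)) = 0
      rw [if_neg (by omega : ¬(i = 0))]
      rcases le_or_gt (a - (c - v) + 1) (i - 1) with h1 | h1
      · exact hY (i - 1) h1
      · exact hyz (by omega) (i - 1)
    · show ∑ j ∈ Finset.range (a + 1), j * (if j = 0 then v else y.1 (j - 1)) = a
      have h1 : ∑ j ∈ Finset.range (a + 1), j * (if j = 0 then v else y.1 (j - 1))
          = ∑ j ∈ Finset.range a, (j + 1) * y.1 j + 0 * (if (0 : ℕ) = 0 then v else y.1 (0 - 1)) := by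
        have hb : ∀ j ∈ Finset.range a,
            (j + 1) * (if j + 1 = 0 then v else y.1 (j + 1 - 1)) = (j + 1) * y.1 j := fun j _ => by
          rw [if_neg (by omega : ¬(j + 1 = 0)), show (j + 1 : ℕ) - 1 = j from rfl]
        rw [Finset.sum_range_succ', Finset.sum_congr rfl hb]
      have h2 : ∑ j ∈ Finset.range a, (j + 1) * y.1 j
          = ∑ j ∈ Finset.range a, j * y.1 j + ∑ j ∈ Finset.range a, y.1 j := by
        rw [← Finset.sum_add_distrib]
        apply Finset.sum_congr rfl
        intro j _
        ring
      have h3 : ∑ j ∈ Finset.range a, j * y.1 j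
          = ∑ j ∈ Finset.range (a - (c - v) + 1), j * y.1 j := by
        rcases Nat.eq_zero_or_pos (c - v) with hcv | hcv
        · rw [Finset.sum_eq_zero (fun i _ => by rw [hyz hcv i, Nat.mul_zero]),
            Finset.sum_eq_zero (fun i _ => by rw [hyz hcv i, Nat.mul_zero])]
        · exact sum_trim (by omega) (fun i hi1 hi2 => by rw [hY i (by omega), Nat.mul_zero])
      have h5 : ∑ j ∈ Finset.range (a - (c - v) + 1), j * y.1 j = 0 → a - (c - v) = 0 := by
        intro hzz
        omega
      rcases Nat.eq_zero_or_pos (c - v) with hcv | hcv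
      · have hz1 : ∑ j ∈ Finset.range (a - (c - v) + 1), j * y.1 j = 0 :=
          Finset.sum_eq_zero (fun i _ => by rw [hyz hcv i, Nat.mul_zero])
        omega
      · omega
    · show ∑ j ∈ Finset.range (a + 1), (if j = 0 then v else y.1 (j - 1)) = c
      omega
  · -- left_inv
    intro x
    apply Subtype.ext
    funext m
    rcases m with _ | m'
    · show (if (0 : ℕ) = 0 then v else x.1 (0 - 1 + 1)) = x.1 0
      rw [if_pos rfl, x.2.2.1]
    · show (if (m' + 1 : ℕ) = 0 then v else x.1 (m' + 1 - 1 + 1)) = x.1 (m' + 1)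
      rw [if_neg (by omega : ¬(m' + 1 : ℕ) = 0)]
      rfl
  · -- right_inv
    intro y
    apply Subtype.ext
    funext j
    show (if (j + 1 : ℕ) = 0 then v else y.1 (j + 1 - 1)) = y.1 j
    rw [if_neg (by omega : ¬(j + 1 : ℕ) = 0)]
    rfl

end Aux7
noncomputable section Aux8
open MvPowerSeries

lemma Dcard (k v a c : ℕ) (hvk : v ≤ k) :
    (Nat.card {x : ℕ → ℕ // DsetP k v a c x} : ℂ) =
      if v ≤ c ∧ c - v ≤ a then CC k (k - v) (a - (c - v)) (c - v) else 0 := by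
  by_cases h : v ≤ c ∧ c - v ≤ a
  · rw [if_pos h, CC]
    congr 1
    exact Nat.card_congr (shift_equiv k v a c hvk h.1 h.2)
  · rw [if_neg h]
    have hemp : IsEmpty {x : ℕ → ℕ // DsetP k v a c x} := by
      constructor
      intro x
      obtain ⟨hw, hx0, htail, hq, hc⟩ := x.2
      have h0mem : (0 : ℕ) ∈ Finset.range (a + 1) := by
        rw [Finset.mem_range]; omega
      have hvc : x.1 0 ≤ ∑ j ∈ Finset.range (a + 1), x.1 j :=
        Finset.single_le_sum (fun i _ => Nat.zero_le _) h0mem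
      have hsplit : ∑ j ∈ Finset.range (a + 1), x.1 j
          = x.1 0 + ∑ j ∈ (Finset.range (a + 1)).erase 0, x.1 j :=
        (Finset.add_sum_erase _ _ h0mem).symm
      have hmono : ∑ j ∈ (Finset.range (a + 1)).erase 0, x.1 j
          ≤ ∑ j ∈ (Finset.range (a + 1)).erase 0, j * x.1 j := by
        apply Finset.sum_le_sum
        intro i hi
        have hne : i ≠ 0 := (Finset.mem_erase.mp hi).1
        calc x.1 i = 1 * x.1 i := (one_mul _).symm
          _ ≤ i * x.1 i := Nat.mul_le_mul_right _ (by omega)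
      have hsub : ∑ j ∈ (Finset.range (a + 1)).erase 0, j * x.1 j
          ≤ ∑ j ∈ Finset.range (a + 1), j * x.1 j :=
        Finset.sum_le_sum_of_subset (Finset.erase_subset _ _)
      rw [hx0] at hvc hsplit
      omega
    rw [Nat.card_of_isEmpty]
    norm_num

lemma CCsplit (k b a c : ℕ) (hbk : b + 1 ≤ k) :
    CC k (b + 1) a c = CC k b a c + (Nat.card {x : ℕ → ℕ // DsetP k (b + 1) a c x} : ℂ) := by
  have conv1 : ∀ x : ℕ → ℕ, CsetP k (b + 1) a c x → x 0 ≤ b → CsetP k b a c x := by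
    intro x hx h
    obtain ⟨hw, hbd, ht⟩ := hx
    exact ⟨hw, boundOK2.mpr h, ht⟩
  have conv2 : ∀ x : ℕ → ℕ, CsetP k (b + 1) a c x → ¬(x 0 ≤ b) → DsetP k (b + 1) a c x := by
    intro x hx h
    obtain ⟨hw, hbd, ht⟩ := hx
    rw [boundOK2] at hbd
    exact ⟨hw, by omega, ht⟩
  have conv3 : ∀ x : ℕ → ℕ, CsetP k b a c x → CsetP k (b + 1) a c x := by
    intro x hx
    obtain ⟨hw, hbd, ht⟩ := hx
    rw [boundOK2] at hbd
    exact ⟨hw, boundOK2.mpr (by omega), ht⟩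
  have conv4 : ∀ x : ℕ → ℕ, DsetP k (b + 1) a c x → CsetP k (b + 1) a c x := by
    intro x hx
    obtain ⟨hw, hbd, ht⟩ := hx
    exact ⟨hw, boundOK2.mpr (by omega), ht⟩
  have E : {x : ℕ → ℕ // CsetP k (b + 1) a c x} ≃
      {x : ℕ → ℕ // CsetP k b a c x} ⊕ {x : ℕ → ℕ // DsetP k (b + 1) a c x} :=
    { toFun := fun x =>
        if h : x.1 0 ≤ b then Sum.inl ⟨x.1, conv1 x.1 x.2 h⟩ else Sum.inr ⟨x.1, conv2 x.1 x.2 h⟩,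
      invFun := fun z => match z with
        | Sum.inl y => ⟨y.1, conv3 y.1 y.2⟩
        | Sum.inr y => ⟨y.1, conv4 y.1 y.2⟩,
      left_inv := by
        intro x
        dsimp only
        by_cases h : x.1 0 ≤ b
        · rw [dif_pos h]
        · rw [dif_neg h],
      right_inv := by
        intro z
        rcases z with y | y
        · dsimp only
          rw [dif_pos (boundOK2.mp y.2.2.1)]
        · dsimp only
          rw [dif_neg (show ¬(y.1 0 ≤ b) by have := y.2.2.1; omega)] }
  have hf1 := Cfin k b a c
  have hf2 := Dfin k (b + 1) a c
  rw [CC, CC, Nat.card_congr E, Nat.card_sum]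
  push_cast
  ring

lemma CC0set (k a c : ℕ) :
    CC k 0 a c = (Nat.card {x : ℕ → ℕ // DsetP k 0 a c x} : ℂ) := by
  rw [CC]
  congr 1
  apply Nat.card_congr
  apply Equiv.subtypeEquivRight
  intro x
  constructor
  · intro ⟨hw, hbd, h⟩
    exact ⟨hw, by have := boundOK2.mp hbd; omega, h⟩
  · intro ⟨hw, hbd, h⟩
    exact ⟨hw, boundOK2.mpr (by omega), h⟩

lemma CCzero (k b a : ℕ) : CC k b a 0 = if a = 0 then 1 else 0 := by
  rcases Nat.eq_zero_or_pos a with ha | ha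
  · subst ha
    rw [if_pos rfl, CC]
    have hmem : ∀ x : ℕ → ℕ, CsetP k b 0 0 x ↔ x = (fun _ => 0) := by
      intro x
      constructor
      · intro ⟨hw, hbd, htail, hq, hc⟩
        funext i
        rcases Nat.eq_zero_or_pos i with hi | hi
        · subst hi
          rw [Finset.sum_range_one] at hc
          exact hc
        · exact htail i (by omega)
      · intro hx
        subst hx
        refine ⟨windowOK2.mpr (fun j => by omega), boundOK2.mpr (by omega),
          fun i _ => rfl, ?_, ?_⟩
        · rw [Finset.sum_range_one, Nat.zero_mul]
        · rw [Finset.sum_range_one]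
    have hu : Nat.card {x : ℕ → ℕ // CsetP k b 0 0 x} = 1 := by
      rw [Nat.card_eq_one_iff_unique]
      constructor
      · constructor
        intro x y
        apply Subtype.ext
        rw [(hmem x.1).mp x.2, (hmem y.1).mp y.2]
      · exact ⟨⟨fun _ => 0, (hmem _).mpr rfl⟩⟩
    rw [hu]
    norm_num
  · rw [if_neg (by omega), CC]
    have hemp : IsEmpty {x : ℕ → ℕ // CsetP k b a 0 x} := by
      constructor
      intro x
      obtain ⟨hw, hbd, htail, hq, hc⟩ := x.2
      have hz : ∀ i ∈ Finset.range (a + 1), x.1 i = 0 := by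
        rw [← Finset.sum_eq_zero_iff, hc]
      have hq0 : ∑ j ∈ Finset.range (a + 1), j * x.1 j = 0 :=
        Finset.sum_eq_zero (fun i hi => by rw [hz i hi, Nat.mul_zero])
      omega
    rw [Nat.card_of_isEmpty]
    norm_num

lemma CC1 (k a c : ℕ) : CC k 0 a c = if c ≤ a then CC k k (a - c) c else 0 := by
  rw [CC0set, Dcard k 0 a c (Nat.zero_le k)]
  simp only [Nat.sub_zero, true_and, Nat.zero_le]

lemma CC2 (k b a c : ℕ) (hbk : b + 1 ≤ k) :
    CC k (b + 1) a c = CC k b a c +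
      (if b + 1 ≤ c ∧ c - (b + 1) ≤ a then
        CC k (k - (b + 1)) (a - (c - (b + 1))) (c - (b + 1)) else 0) := by
  rw [CCsplit k b a c hbk, Dcard k (b + 1) a c hbk]

lemma main_induction (k : ℕ) (hk : 1 ≤ k) :
    ∀ N a c, a + c ≤ N → ∀ b, b ≤ k → SS k b a c = CC k b a c := by
  intro N
  induction N with
  | zero =>
    intro a c h b _
    have ha : a = 0 := by omega
    have hc : c = 0 := by omega
    subst ha; subst hc
    rw [AC0, CCzero]
  | succ N ih =>
    intro a c hac b hbk
    rcases Nat.eq_zero_or_pos c with hc0 | hc1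
    · subst hc0
      rw [AC0, CCzero]
    · have key : ∀ b', b' ≤ k → SS k b' a c = CC k b' a c := by
        intro b'
        induction b' with
        | zero =>
          intro _
          rw [AC1 k a c hk, CC1 k a c]
          by_cases hca : c ≤ a
          · rw [if_pos hca, if_pos hca]
            exact ih (a - c) c (by omega) k (le_refl k)
          · rw [if_neg hca, if_neg hca]
        | succ b' ihb =>
          intro hb1
          rw [AC2 k b' a c hk hb1, CC2 k b' a c hb1, ihb (by omega)]
          congr 1
          by_cases hcond : b' + 1 ≤ c ∧ c - (b' + 1) ≤ a
          · rw [if_pos hcond, if_pos hcond]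
            exact ih (a - (c - (b' + 1))) (c - (b' + 1)) (by omega) (k - (b' + 1)) (by omega)
          · rw [if_neg hcond, if_neg hcond]
      exact key b hbk

lemma CC_eq (k b a c : ℕ) :
    MvPowerSeries.coeff (idx2 a c) (chiInf k 2 fun _ => b) = CC k b a c := by
  have h : MvPowerSeries.coeff (idx2 a c) (chiInf k 2 fun _ => b) =
      (Nat.card {x : ℕ → ℕ // windowOK k 2 x ∧ boundOK 2 (fun _ => b) x ∧
        (∀ i, (idx2 a c) 0 + 1 ≤ i → x i = 0) ∧
        (∑ j ∈ Finset.range ((idx2 a c) 0 + 1), j * x j = (idx2 a c) 0) ∧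
        (∑ j ∈ Finset.range ((idx2 a c) 0 + 1), x j = (idx2 a c) 1)} : ℂ) := rfl
  rw [h]
  simp only [idx2_apply0, idx2_apply1]
  rfl

end Aux8

/-- The bosonic formula for `l = 2`:
`χ^{(∞)}_{k,2;b_0}(q,z) = Σ_{n≥0} (-1)^{n+1} q^{n²k+nb_0+3n(n+1)/2} z^{nk+b_0+n+1}/((q)_n (q^n z)_∞)
 + Σ_{n≥0} (-1)^n q^{n²k-nb_0+n(3n-1)/2} z^{nk+n}/((q)_n (q^n z)_∞)`,
as an identity of formal power series (coefficientwise). -/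
theorem stmt8 (k b0 : ℕ) (hk : 0 < k) (hb : b0 ≤ k) (e : Fin 2 →₀ ℕ) :
    HasSum
      (fun n : ℕ =>
        MvPowerSeries.coeff e ((-1 : ℂ) ^ (n + 1) •
          (Qv ^ (n ^ 2 * k + n * b0 + 3 * n * (n + 1) / 2) * Zv ^ (n * k + b0 + n + 1) *
            (pochQ n * pochInfQZ n)⁻¹)) +
        MvPowerSeries.coeff e ((-1 : ℂ) ^ n •
          (Qv ^ (n ^ 2 * k - n * b0 + n * (3 * n - 1) / 2) * Zv ^ (n * k + n) *
            (pochQ n * pochInfQZ n)⁻¹)))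
      (MvPowerSeries.coeff e (chiInf k 2 fun _ => b0)) := by
  have he : e = idx2 (e 0) (e 1) := eq_idx2 e
  rw [he, CC_eq k b0 (e 0) (e 1),
    ← main_induction k hk (e 0 + e 1) (e 0) (e 1) le_rfl b0 hb]
  have hvan : ∀ n ∉ Finset.range (e 0 + 1),
      (MvPowerSeries.coeff (idx2 (e 0) (e 1)) (tOne k b0 n) +
        MvPowerSeries.coeff (idx2 (e 0) (e 1)) (tTwo k b0 n)) = 0 := by
    intro n hn
    rw [Finset.mem_range, not_lt] at hn
    rw [tOne_zero_q k b0 n (e 0) (e 1) hk (by omega),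
      tTwo_zero_q k b0 n (e 0) (e 1) hk (by omega), add_zero]
  exact hasSum_sum_of_ne_finset_zero hvan
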